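/- arXiv:2005.00379 — 9 statements merged into one kernel-verified Lean document; each statement's English description precedes it below -/
import Mathlib

section
/- Let m, n ≥ 2 and let A be a 12-avoiding m×n (0,1)-matrix with exactly m + n − 1 ones. Then the set of positions of the 1's of A is a complete R-L zigzag path; that is, A(1,n) = A(m,1) = 1 and every position (i,j) with A(i,j) = 1 and (i,j) ≠ (m,1) satisfies exactly one of A(i,j−1) = 1 and A(i+1,j) = 1. -/
/-- Number of 1's of an `m × n` (0,1)-matrix `A` (1-indexed entries). -/
def onesCount (m n : ℕ) (A : ℕ → ℕ → Bool) : ℕ :=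
  (((Finset.Icc 1 m) ×ˢ (Finset.Icc 1 n)).filter fun p => A p.1 p.2 = true).card

/-- `A` is 12-avoiding: no rows `i₁ < i₂` and columns `j₁ < j₂` with
`A i₁ j₁ = A i₂ j₂ = 1`. -/
def Avoid12 (m n : ℕ) (A : ℕ → ℕ → Bool) : Prop :=
  ¬ ∃ i₁ i₂ j₁ j₂ : ℕ, 1 ≤ i₁ ∧ i₁ < i₂ ∧ i₂ ≤ m ∧ 1 ≤ j₁ ∧ j₁ < j₂ ∧ j₂ ≤ n ∧
    A i₁ j₁ = true ∧ A i₂ j₂ = true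

theorem stmt_2 (m n : ℕ) (hm : 2 ≤ m) (hn : 2 ≤ n) (A : ℕ → ℕ → Bool)
    (hA : Avoid12 m n A) (hcard : onesCount m n A = m + n - 1) :
    A 1 n = true ∧ A m 1 = true ∧
    ∀ i j : ℕ, 1 ≤ i → i ≤ m → 1 ≤ j → j ≤ n → A i j = true → (i, j) ≠ (m, 1) →
      Xor' (2 ≤ j ∧ A i (j - 1) = true) (i + 1 ≤ m ∧ A (i + 1) j = true) := by
  classical
  set S : Finset (ℕ × ℕ) :=
    ((Finset.Icc 1 m) ×ˢ (Finset.Icc 1 n)).filter (fun p => A p.1 p.2 = true) with hS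
  have hmemS : ∀ p : ℕ × ℕ, p ∈ S ↔
      (1 ≤ p.1 ∧ p.1 ≤ m ∧ 1 ≤ p.2 ∧ p.2 ≤ n ∧ A p.1 p.2 = true) := by
    intro p
    simp [hS, Finset.mem_filter, Finset.mem_product, Finset.mem_Icc, and_assoc]
  have hinj : ∀ p ∈ S, ∀ q ∈ S, p.1 + n - p.2 = q.1 + n - q.2 → p = q := by
    rintro ⟨a, b⟩ hp ⟨c, d⟩ hq h
    rw [hmemS] at hp hq
    obtain ⟨hp1, hp2, hp3, hp4, hp5⟩ := hp
    obtain ⟨hq1, hq2, hq3, hq4, hq5⟩ := hq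
    simp only at h hp5 hq5 ⊢
    rcases lt_trichotomy a c with hlt | heq | hgt
    · exact absurd ⟨a, c, b, d, hp1, hlt, hq2, hp3, by omega, hq4, hp5, hq5⟩ hA
    · simp only [Prod.mk.injEq]; omega
    · exact absurd ⟨c, a, d, b, hq1, hgt, hp2, hq3, by omega, hp4, hq5, hp5⟩ hA
  have hcardS : S.card = m + n - 1 := hcard
  have himg : S.image (fun p => p.1 + n - p.2) = Finset.Icc 1 (m + n - 1) := by
    apply Finset.eq_of_subset_of_card_le
    · intro k hk
      simp only [Finset.mem_image] at hk
      obtain ⟨p, hp, hpk⟩ := hk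
      rw [hmemS] at hp
      simp only [Finset.mem_Icc]
      omega
    · rw [Finset.card_image_of_injOn (fun p hp q hq h => hinj p hp q hq h), hcardS,
        Nat.card_Icc]
      omega
  have hsurj : ∀ k, 1 ≤ k → k ≤ m + n - 1 → ∃ p, p ∈ S ∧ p.1 + n - p.2 = k := by
    intro k h1 h2
    have hk : k ∈ S.image (fun p => p.1 + n - p.2) := by
      rw [himg]; exact Finset.mem_Icc.mpr ⟨h1, h2⟩
    simpa [Finset.mem_image] using hk
  have h1n : A 1 n = true := by
    obtain ⟨p, hp, hpk⟩ := hsurj 1 le_rfl (by omega)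
    rw [hmemS] at hp
    obtain ⟨hp1, hp2, hp3, hp4, hp5⟩ := hp
    have e1 : p.1 = 1 := by omega
    have e2 : p.2 = n := by omega
    rw [← e1, ← e2]; exact hp5
  have hm1 : A m 1 = true := by
    obtain ⟨p, hp, hpk⟩ := hsurj (m + n - 1) (by omega) le_rfl
    rw [hmemS] at hp
    obtain ⟨hp1, hp2, hp3, hp4, hp5⟩ := hp
    have e1 : p.1 = m := by omega
    have e2 : p.2 = 1 := by omega
    rw [← e1, ← e2]; exact hp5
  refine ⟨h1n, hm1, ?_⟩
  intro i j hi1 him hj1 hjn hAij hne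
  have hij : ¬(i = m ∧ j = 1) := by
    rintro ⟨h1, h2⟩
    exact hne (by rw [h1, h2])
  have hklt : i + n - j < m + n - 1 := by omega
  obtain ⟨p, hp, hpk⟩ := hsurj (i + n - j + 1) (by omega) (by omega)
  rw [hmemS] at hp
  obtain ⟨hp1, hp2, hp3, hp4, hp5⟩ := hp
  have hcase : (p.1 = i ∧ p.2 + 1 = j) ∨ (p.1 = i + 1 ∧ p.2 = j) := by
    rcases lt_trichotomy p.1 i with h | h | h
    · exact absurd ⟨p.1, i, p.2, j, hp1, h, him, hp3, by omega, hjn, hp5, hAij⟩ hA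
    · left; exact ⟨h, by omega⟩
    · by_cases h2 : p.1 = i + 1
      · right; exact ⟨h2, by omega⟩
      · exact absurd ⟨i, p.1, j, p.2, hi1, h, hp2, hj1, by omega, hp4, hAij, hp5⟩ hA
  have hnotboth : ¬((2 ≤ j ∧ A i (j - 1) = true) ∧ (i + 1 ≤ m ∧ A (i + 1) j = true)) := by
    rintro ⟨⟨hj2, hL⟩, ⟨him2, hR⟩⟩
    have hL' : ((i, j - 1) : ℕ × ℕ) ∈ S :=
      (hmemS _).mpr ⟨hi1, him, by omega, by omega, hL⟩
    have hR' : ((i + 1, j) : ℕ × ℕ) ∈ S :=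
      (hmemS _).mpr ⟨by omega, him2, hj1, hjn, hR⟩
    have heq := hinj _ hL' _ hR' (by simp only; omega)
    simp only [Prod.mk.injEq] at heq
    omega
  rcases hcase with ⟨e1, e2⟩ | ⟨e1, e2⟩
  · have hj2 : 2 ≤ j := by omega
    have hL : A i (j - 1) = true := by
      have e3 : j - 1 = p.2 := by omega
      rw [e3, ← e1]; exact hp5
    exact Or.inl ⟨⟨hj2, hL⟩, fun hb => hnotboth ⟨⟨hj2, hL⟩, hb⟩⟩
  · have him2 : i + 1 ≤ m := by omega
    have hR : A (i + 1) j = true := by rw [← e1, ← e2]; exact hp5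
    exact Or.inr ⟨⟨him2, hR⟩, fun hb => hnotboth ⟨hb, ⟨him2, hR⟩⟩⟩
end

section
/- Let 0 ≤ e₁ ≤ e₂ ≤ ⋯ ≤ e_m ≤ n and let A be a 12-avoiding m×n (0,1)-matrix such that A(i,j) = 0 whenever j > e_i (a 12-avoiding (0,1)-staircase matrix). Then the number of 1's of A is at most max{ e_i + m − i : 1 ≤ i ≤ m }. -/
theorem stmt_3 (m n : ℕ) (hm : 1 ≤ m) (e : ℕ → ℕ)
    (he_mono : ∀ i : ℕ, 1 ≤ i → i < m → e i ≤ e (i + 1)) (he_n : e m ≤ n)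
    (A : ℕ → ℕ → Bool) (hA : Avoid12 m n A)
    (hstair : ∀ i j : ℕ, 1 ≤ i → i ≤ m → e i < j → j ≤ n → A i j = false) :
    onesCount m n A ≤ (Finset.Icc 1 m).sup (fun i => e i + (m - i)) := by
  classical
  set S := (Finset.Icc 1 m).sup (fun i => e i + (m - i)) with hS
  have hnolt : ∀ i₁ i₂ j₁ j₂, 1 ≤ i₁ → i₁ < i₂ → i₂ ≤ m → 1 ≤ j₁ → j₂ ≤ n →
      A i₁ j₁ = true → A i₂ j₂ = true → j₂ ≤ j₁ := by
    intro i₁ i₂ j₁ j₂ h1 h2 h3 h4 h5 hA1 hA2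
    by_contra h
    exact hA ⟨i₁, i₂, j₁, j₂, h1, h2, h3, h4, by omega, h5, hA1, hA2⟩
  have key : onesCount m n A ≤ (Finset.Icc 1 S).card := by
    apply Finset.card_le_card_of_injOn (fun p => p.2 + (m - p.1))
    · intro p hp
      simp only [Finset.mem_coe, Finset.mem_filter, Finset.mem_product, Finset.mem_Icc] at hp
      obtain ⟨⟨⟨hi1, hi2⟩, hj1, hj2⟩, hA1⟩ := hp
      have hje : p.2 ≤ e p.1 := by
        by_contra h
        push_neg at h
        have := hstair p.1 p.2 hi1 hi2 h hj2
        simp [this] at hA1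
      simp only [Finset.mem_coe, Finset.mem_Icc]
      refine ⟨by omega, ?_⟩
      calc p.2 + (m - p.1) ≤ e p.1 + (m - p.1) := by omega
        _ ≤ S := hS ▸ Finset.le_sup (f := fun i => e i + (m - i)) (Finset.mem_Icc.mpr ⟨hi1, hi2⟩)
    · intro p hp q hq hfe
      simp only [Finset.mem_coe, Finset.mem_filter, Finset.mem_product,
        Finset.mem_Icc] at hp hq
      obtain ⟨⟨⟨hpi1, hpi2⟩, hpj1, hpj2⟩, hpA⟩ := hp
      obtain ⟨⟨⟨hqi1, hqi2⟩, hqj1, hqj2⟩, hqA⟩ := hq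
      replace hfe : p.2 + (m - p.1) = q.2 + (m - q.1) := hfe
      rcases lt_trichotomy p.1 q.1 with h | h | h
      · have := hnolt p.1 q.1 p.2 q.2 hpi1 h hqi2 hpj1 hqj2 hpA hqA
        exfalso; omega
      · have : p.2 = q.2 := by omega
        exact Prod.ext h this
      · have := hnolt q.1 p.1 q.2 p.2 hqi1 h hpi2 hqj1 hpj2 hqA hpA
        exfalso; omega
  simpa [onesCount, Nat.card_Icc] using key
end

section
/- Let m, n, k be positive integers with m, n ≥ k ≥ 3. If A is a 12⋯k-avoiding m×n (0,1)-matrix, then the number of 1's of A is at most (k−1)(m + n − (k−1)). -/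
/-- `A` is `12⋯k`-avoiding. -/
def AvoidId (m n k : ℕ) (A : ℕ → ℕ → Bool) : Prop :=
  ¬ ∃ r c : ℕ → ℕ,
    (∀ t, t + 1 < k → r t < r (t + 1) ∧ c t < c (t + 1)) ∧
    (∀ t, t < k → 1 ≤ r t ∧ r t ≤ m ∧ 1 ≤ c t ∧ c t ≤ n) ∧
    (∀ t, t < k → A (r t) (c t) = true)

/-- There is an increasing chain of `t` ones ending at `(i,j)`. -/
def HasChain (A : ℕ → ℕ → Bool) (i j t : ℕ) : Prop :=
  ∃ r c : ℕ → ℕ,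
    (∀ s, s + 1 < t → r s < r (s + 1) ∧ c s < c (s + 1)) ∧
    (∀ s, s < t → 1 ≤ r s ∧ 1 ≤ c s ∧ A (r s) (c s) = true) ∧
    r (t - 1) = i ∧ c (t - 1) = j

lemma chain_grow {r : ℕ → ℕ} {t : ℕ} (hr : ∀ s, s + 1 < t → r s < r (s + 1)) :
    ∀ d s, s + d < t → r s + d ≤ r (s + d) := by
  intro d
  induction d with
  | zero => intro s _; simp
  | succ d ih =>
    intro s h
    have h1 : s + d < t := by omega
    have h2 : (s + d) + 1 < t := by omega
    have := ih s h1
    have := hr (s + d) h2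
    have heq : s + (d + 1) = (s + d) + 1 := by omega
    rw [heq]; omega

lemma hasChain_one {A : ℕ → ℕ → Bool} {i j : ℕ} (hA : A i j = true)
    (hi : 1 ≤ i) (hj : 1 ≤ j) : HasChain A i j 1 := by
  exact ⟨fun _ => i, fun _ => j, by intro s hs; omega,
    by intro s _; exact ⟨hi, hj, hA⟩, rfl, rfl⟩

lemma hasChain_extend {A : ℕ → ℕ → Bool} {i j i' j' t : ℕ}
    (h : HasChain A i j t) (ht : 1 ≤ t) (hii : i < i') (hjj : j < j')
    (hA : A i' j' = true) : HasChain A i' j' (t + 1) := by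
  obtain ⟨r, c, hmono, hent, hri, hcj⟩ := h
  refine ⟨fun s => if s < t then r s else i', fun s => if s < t then c s else j', ?_, ?_, ?_, ?_⟩
  · intro s hs
    rcases Nat.lt_or_ge (s + 1) t with h1 | h1
    · have : s < t := by omega
      simp only [if_pos h1, if_pos this]
      exact hmono s h1
    · have hst : s = t - 1 := by omega
      have hslt : s < t := by omega
      have h2 : ¬ (s + 1 < t) := by omega
      simp only [if_pos hslt, if_neg h2]
      subst hst
      rw [hri, hcj]
      exact ⟨hii, hjj⟩
  · intro s hs
    rcases Nat.lt_or_ge s t with h1 | h1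
    · simp only [if_pos h1]; exact hent s h1
    · have h2 : ¬ (s < t) := by omega
      simp only [if_neg h2]
      exact ⟨by omega, by omega, hA⟩
  · simp
  · simp

lemma hasChain_ge {A : ℕ → ℕ → Bool} {i j t : ℕ} (h : HasChain A i j t)
    (ht : 1 ≤ t) : t ≤ i ∧ t ≤ j := by
  obtain ⟨r, c, hmono, hent, hri, hcj⟩ := h
  have h1 := chain_grow (fun s hs => (hmono s hs).1) (t - 1) 0 (by omega)
  have h2 := chain_grow (fun s hs => (hmono s hs).2) (t - 1) 0 (by omega)
  have h3 := hent 0 (by omega)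
  simp only [Nat.zero_add] at h1 h2
  rw [hri] at h1; rw [hcj] at h2
  omega

lemma not_hasChain_k {m n k : ℕ} {A : ℕ → ℕ → Bool} (hA : AvoidId m n k A)
    (hk : 1 ≤ k) {i j : ℕ} (hi : i ≤ m) (hj : j ≤ n) : ¬ HasChain A i j k := by
  rintro ⟨r, c, hmono, hent, hri, hcj⟩
  apply hA
  refine ⟨r, c, hmono, ?_, fun t ht => (hent t ht).2.2⟩
  intro t ht
  have h1 := hent t ht
  have h2 := chain_grow (fun s hs => (hmono s hs).1) (k - 1 - t) t (by omega)
  have h3 := chain_grow (fun s hs => (hmono s hs).2) (k - 1 - t) t (by omega)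
  have heq : t + (k - 1 - t) = k - 1 := by omega
  rw [heq, hri] at h2
  rw [heq, hcj] at h3
  omega

/-- Length of the longest chain of ones ending at `(i,j)`, capped at `K`. -/
noncomputable def ell (A : ℕ → ℕ → Bool) (K i j : ℕ) : ℕ :=
  @Nat.findGreatest (HasChain A i j) (Classical.decPred _) K

theorem stmt_5 (m n k : ℕ) (hk : 3 ≤ k) (hm : k ≤ m) (hn : k ≤ n)
    (A : ℕ → ℕ → Bool) (hA : AvoidId m n k A) :
    onesCount m n A ≤ (k - 1) * (m + n - (k - 1)) := by
  classical
  set K := k - 1 with hK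
  set D := ((Finset.Icc 1 m) ×ˢ (Finset.Icc 1 n)).filter (fun p => A p.1 p.2 = true) with hD
  -- basic facts about membership in D
  have hDmem : ∀ p ∈ D, 1 ≤ p.1 ∧ p.1 ≤ m ∧ 1 ≤ p.2 ∧ p.2 ≤ n ∧ A p.1 p.2 = true := by
    intro p hp
    simp only [hD, Finset.mem_filter, Finset.mem_product, Finset.mem_Icc] at hp
    exact ⟨hp.1.1.1, hp.1.1.2, hp.1.2.1, hp.1.2.2, hp.2⟩
  -- ell is between 1 and K on D
  have hell1 : ∀ p ∈ D, 1 ≤ ell A K p.1 p.2 := by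
    intro p hp
    obtain ⟨h1, h2, h3, h4, h5⟩ := hDmem p hp
    exact Nat.le_findGreatest (by omega) (hasChain_one h5 h1 h3)
  have hellK : ∀ p ∈ D, ell A K p.1 p.2 ≤ K := fun p _ => Nat.findGreatest_le K
  have hellspec : ∀ p ∈ D, HasChain A p.1 p.2 (ell A K p.1 p.2) := by
    intro p hp
    obtain ⟨h1, h2, h3, h4, h5⟩ := hDmem p hp
    exact Nat.findGreatest_spec (by omega) (hasChain_one h5 h1 h3)
  -- antichain property: within a level set no strict domination
  have hanti : ∀ p ∈ D, ∀ q ∈ D, ell A K p.1 p.2 = ell A K q.1 q.2 →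
      p.1 < q.1 → p.2 < q.2 → False := by
    intro p hp q hq heq h1 h2
    obtain ⟨_, _, _, _, hq5⟩ := hDmem q hq
    have hc := hasChain_extend (hellspec p hp) (hell1 p hp) h1 h2 hq5
    rcases Nat.lt_or_ge (ell A K p.1 p.2 + 1) k with hlt | hge
    · have : ell A K p.1 p.2 + 1 ≤ ell A K q.1 q.2 :=
        Nat.le_findGreatest (by omega) hc
      omega
    · have hek : ell A K p.1 p.2 + 1 = k := by
        have := hellK p hp; omega
      rw [hek] at hc
      exact not_hasChain_k hA (by omega) (hDmem q hq).2.1 (hDmem q hq).2.2.2.1 hc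
  -- fiberwise count
  have hfiber : D.card = ∑ t ∈ Finset.Icc 1 K,
      (D.filter (fun p => ell A K p.1 p.2 = t)).card := by
    apply Finset.card_eq_sum_card_fiberwise
    intro p hp
    simp only [Finset.mem_coe, Finset.mem_Icc]
    exact ⟨hell1 p hp, hellK p hp⟩
  -- per level bound
  have hlevel : ∀ t ∈ Finset.Icc 1 K,
      ((D.filter (fun p => ell A K p.1 p.2 = t)).card : ℤ) ≤ (m : ℤ) + n + 1 - 2 * t := by
    intro t ht
    simp only [Finset.mem_Icc] at ht
    have hcard : (D.filter (fun p => ell A K p.1 p.2 = t)).card ≤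
        (Finset.Icc ((t : ℤ) - n) ((m : ℤ) - t)).card := by
      apply Finset.card_le_card_of_injOn (fun p => (p.1 : ℤ) - p.2)
      · intro p hp
        simp only [Finset.mem_coe, Finset.mem_filter] at hp
        obtain ⟨hpD, hpt⟩ := hp
        obtain ⟨h1, h2, h3, h4, h5⟩ := hDmem p hpD
        have hge := hasChain_ge (hpt ▸ hellspec p hpD) (by omega)
        simp only [Finset.mem_coe, Finset.mem_Icc]
        constructor <;> [skip; skip] <;>
          (push_cast; omega)
      · intro p hp q hq hpq
        simp only [Finset.mem_coe, Finset.mem_filter] at hp hq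
        have hp2 := (hDmem p hp.1); have hq2 := (hDmem q hq.1)
        have heq : ell A K p.1 p.2 = ell A K q.1 q.2 := by rw [hp.2, hq.2]
        simp only at hpq
        rcases lt_trichotomy p.1 q.1 with h | h | h
        · exact absurd (hanti p hp.1 q hq.1 heq h (by omega)) (by simp)
        · have : p.2 = q.2 := by omega
          exact Prod.ext h this
        · exact absurd (hanti q hq.1 p hp.1 heq.symm h (by omega)) (by simp)
    have : ((Finset.Icc ((t : ℤ) - n) ((m : ℤ) - t)).card : ℤ) = (m : ℤ) + n + 1 - 2 * t := by
      rw [Int.card_Icc]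
      have : ((m : ℤ) - t) + 1 - ((t : ℤ) - n) = (m : ℤ) + n + 1 - 2 * t := by ring
      rw [this]
      rw [Int.toNat_of_nonneg (by omega)]
    calc ((D.filter (fun p => ell A K p.1 p.2 = t)).card : ℤ)
        ≤ ((Finset.Icc ((t : ℤ) - n) ((m : ℤ) - t)).card : ℤ) := by exact_mod_cast hcard
      _ = (m : ℤ) + n + 1 - 2 * t := this
  -- sum the bounds
  have hsum : ∀ N : ℕ, ∑ t ∈ Finset.Icc 1 N, ((m : ℤ) + n + 1 - 2 * t) =
      (N : ℤ) * ((m : ℤ) + n - N) := by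
    intro N
    induction N with
    | zero => simp
    | succ N ih =>
      rw [Finset.sum_Icc_succ_top (by omega), ih]
      push_cast
      ring
  have hbound : (D.card : ℤ) ≤ (K : ℤ) * ((m : ℤ) + n - K) := by
    rw [hfiber]
    push_cast
    calc ∑ t ∈ Finset.Icc 1 K, ((D.filter (fun p => ell A K p.1 p.2 = t)).card : ℤ)
        ≤ ∑ t ∈ Finset.Icc 1 K, ((m : ℤ) + n + 1 - 2 * t) := Finset.sum_le_sum hlevel
      _ = (K : ℤ) * ((m : ℤ) + n - K) := hsum K
  have hfin : ((K * (m + n - K) : ℕ) : ℤ) = (K : ℤ) * ((m : ℤ) + n - K) := by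
    have hKle : K ≤ m + n := by omega
    push_cast [Nat.cast_sub hKle]
    ring
  show D.card ≤ K * (m + n - K)
  omega
end

section
/- Let m, n, k be positive integers with m, n ≥ k ≥ 3. Then there exists a 12⋯k-avoiding m×n (0,1)-matrix whose number of 1's equals (k−1)(m + n − (k−1)); hence the maximum number of 1's of a 12⋯k-avoiding m×n (0,1)-matrix is exactly (k−1)(m + n − (k−1)). -/
def chainEnd (A : ℕ → ℕ → Bool) : ℕ → ℕ → ℕ
  | i, j =>
    1 + (((Finset.Icc 1 (i - 1)) ×ˢ (Finset.Icc 1 (j - 1))).filter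
        (fun p => A p.1 p.2 = true)).attach.sup
        (fun p => chainEnd A p.1.1 p.1.2)
termination_by i _ => i
decreasing_by
  have hp := p.2
  simp only [Finset.mem_filter, Finset.mem_product, Finset.mem_Icc] at hp
  omega

lemma chainEnd_eq (A : ℕ → ℕ → Bool) (i j : ℕ) :
    chainEnd A i j = 1 + (((Finset.Icc 1 (i - 1)) ×ˢ (Finset.Icc 1 (j - 1))).filter
        (fun p => A p.1 p.2 = true)).attach.sup
        (fun p => chainEnd A p.1.1 p.1.2) := by
  rw [chainEnd]

lemma one_le_chainEnd (A : ℕ → ℕ → Bool) (i j : ℕ) : 1 ≤ chainEnd A i j := by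
  rw [chainEnd_eq]; omega

lemma chainEnd_le_fst (A : ℕ → ℕ → Bool) :
    ∀ i j : ℕ, 1 ≤ i → chainEnd A i j ≤ i := by
  intro i
  induction i using Nat.strong_induction_on with
  | _ i ih =>
    intro j hi
    rw [chainEnd_eq]
    have h : (((Finset.Icc 1 (i - 1)) ×ˢ (Finset.Icc 1 (j - 1))).filter
        (fun p => A p.1 p.2 = true)).attach.sup
        (fun p => chainEnd A p.1.1 p.1.2) ≤ i - 1 := by
      apply Finset.sup_le
      intro p _
      have hp := p.2
      simp only [Finset.mem_filter, Finset.mem_product, Finset.mem_Icc] at hp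
      have := ih p.1.1 (by omega) p.1.2 (by omega)
      omega
    omega

lemma chainEnd_le_snd (A : ℕ → ℕ → Bool) :
    ∀ i j : ℕ, 1 ≤ j → chainEnd A i j ≤ j := by
  intro i
  induction i using Nat.strong_induction_on with
  | _ i ih =>
    intro j hj
    rw [chainEnd_eq]
    have h : (((Finset.Icc 1 (i - 1)) ×ˢ (Finset.Icc 1 (j - 1))).filter
        (fun p => A p.1 p.2 = true)).attach.sup
        (fun p => chainEnd A p.1.1 p.1.2) ≤ j - 1 := by
      apply Finset.sup_le
      intro p _
      have hp := p.2
      simp only [Finset.mem_filter, Finset.mem_product, Finset.mem_Icc] at hp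
      have := ih p.1.1 (by omega) p.1.2 (by omega)
      omega
    omega

lemma chainEnd_lt (A : ℕ → ℕ → Bool) {i j i' j' : ℕ} (hA : A i j = true)
    (hi : 1 ≤ i) (hj : 1 ≤ j) (hii : i < i') (hjj : j < j') :
    chainEnd A i j < chainEnd A i' j' := by
  rw [chainEnd_eq A i' j']
  have hx : (i, j) ∈ ((Finset.Icc 1 (i' - 1)) ×ˢ (Finset.Icc 1 (j' - 1))).filter
      (fun p => A p.1 p.2 = true) := by
    simp only [Finset.mem_filter, Finset.mem_product, Finset.mem_Icc]
    exact ⟨⟨⟨hi, by omega⟩, ⟨hj, by omega⟩⟩, hA⟩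
  have := Finset.le_sup (f := fun p : {x // x ∈ ((Finset.Icc 1 (i' - 1)) ×ˢ (Finset.Icc 1 (j' - 1))).filter
      (fun p => A p.1 p.2 = true)} => chainEnd A p.1.1 p.1.2) (Finset.mem_attach _ ⟨(i, j), hx⟩)
  simp only at this
  omega

lemma chainEnd_chain (A : ℕ → ℕ → Bool) (m n : ℕ) :
    ∀ i j : ℕ, 1 ≤ i → i ≤ m → 1 ≤ j → j ≤ n → A i j = true →
    ∃ r c : ℕ → ℕ,
      (∀ t, t + 1 < chainEnd A i j → r t < r (t + 1) ∧ c t < c (t + 1)) ∧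
      (∀ t, t < chainEnd A i j →
        1 ≤ r t ∧ r t ≤ m ∧ 1 ≤ c t ∧ c t ≤ n ∧ A (r t) (c t) = true) ∧
      r (chainEnd A i j - 1) = i ∧ c (chainEnd A i j - 1) = j := by
  intro i
  induction i using Nat.strong_induction_on with
  | _ i ih =>
    intro j hi him hj hjn hA
    set s := ((Finset.Icc 1 (i - 1)) ×ˢ (Finset.Icc 1 (j - 1))).filter
        (fun p => A p.1 p.2 = true) with hs
    rcases eq_or_ne s ∅ with he | he
    · have hL : chainEnd A i j = 1 := by
        rw [chainEnd_eq, ← hs, he]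
        simp
      refine ⟨fun _ => i, fun _ => j, ?_, ?_, ?_, ?_⟩
      · intro t ht; rw [hL] at ht; omega
      · intro t _; exact ⟨hi, him, hj, hjn, hA⟩
      · rfl
      · rfl
    · have hne : s.attach.Nonempty := by
        rw [Finset.attach_nonempty_iff]
        exact Finset.nonempty_iff_ne_empty.2 he
      obtain ⟨q, -, hq⟩ := Finset.exists_mem_eq_sup s.attach hne
        (fun p => chainEnd A p.1.1 p.1.2)
      have hqm := q.2
      simp only [hs, Finset.mem_filter, Finset.mem_product, Finset.mem_Icc] at hqm
      obtain ⟨⟨⟨ha1, ha2⟩, hb1, hb2⟩, hab⟩ := hqm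
      set a := q.1.1
      set b := q.1.2
      have hL : chainEnd A i j = chainEnd A a b + 1 := by
        rw [chainEnd_eq, ← hs, ← hq]; omega
      obtain ⟨r, c, hmono, hbd, hra, hcb⟩ :=
        ih a (by omega) b (by omega) (by omega) (by omega) (by omega) hab
      set ℓ := chainEnd A a b with hℓ
      have hℓ1 : 1 ≤ ℓ := by
        rw [hℓ, chainEnd_eq]; omega
      refine ⟨fun t => if t < ℓ then r t else i, fun t => if t < ℓ then c t else j,
        ?_, ?_, ?_, ?_⟩
      · intro t ht
        rw [hL] at ht
        rcases Nat.lt_or_ge (t + 1) ℓ with h1 | h1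
        · simp only [if_pos (by omega : t < ℓ), if_pos h1]
          exact hmono t h1
        · have htℓ : t + 1 = ℓ := by omega
          have ht' : t = ℓ - 1 := by omega
          simp only [if_pos (by omega : t < ℓ), if_neg (by omega : ¬ t + 1 < ℓ)]
          constructor
          · rw [ht', hra]; omega
          · rw [ht', hcb]; omega
      · intro t ht
        rw [hL] at ht
        rcases Nat.lt_or_ge t ℓ with h1 | h1
        · simp only [if_pos h1]
          exact hbd t h1
        · simp only [if_neg (by omega : ¬ t < ℓ)]
          exact ⟨hi, him, hj, hjn, hA⟩
      · rw [hL]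
        simp only [Nat.add_sub_cancel, if_neg (by omega : ¬ ℓ < ℓ)]
      · rw [hL]
        simp only [Nat.add_sub_cancel, if_neg (by omega : ¬ ℓ < ℓ)]

lemma chainEnd_le_of_avoid {m n k : ℕ} {A : ℕ → ℕ → Bool} (hav : AvoidId m n k A)
    (hk : 1 ≤ k) {i j : ℕ} (hi : 1 ≤ i) (him : i ≤ m) (hj : 1 ≤ j) (hjn : j ≤ n)
    (hA : A i j = true) : chainEnd A i j ≤ k - 1 := by
  by_contra hcon
  have hkL : k ≤ chainEnd A i j := by omega
  obtain ⟨r, c, hmono, hbd, -, -⟩ := chainEnd_chain A m n i j hi him hj hjn hA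
  exact hav ⟨r, c, fun t ht => hmono t (by omega),
    fun t ht => by have := hbd t (by omega); tauto,
    fun t ht => by have := hbd t (by omega); tauto⟩

lemma sum_arith (M : ℕ) : ∀ K : ℕ, 2 * K ≤ M →
    ∑ ℓ ∈ Finset.Icc 1 K, (M + 1 - 2 * ℓ) = K * (M - K) := by
  intro K
  induction K with
  | zero => simp
  | succ K ih =>
    intro h
    rw [Finset.sum_Icc_succ_top (by omega), ih (by omega)]
    obtain ⟨D, hD⟩ : ∃ D, M = D + 2 * K + 2 := ⟨M - (2 * K + 2), by omega⟩
    subst hD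
    have e1 : D + 2 * K + 2 - K = D + K + 2 := by omega
    have e2 : D + 2 * K + 2 + 1 - 2 * (K + 1) = D + 1 := by omega
    have e3 : D + 2 * K + 2 - (K + 1) = D + K + 1 := by omega
    rw [e1, e2, e3]; ring

lemma upper_bound {m n k : ℕ} (hk : 3 ≤ k) (hm : k ≤ m) (hn : k ≤ n)
    {A : ℕ → ℕ → Bool} (hav : AvoidId m n k A) :
    onesCount m n A ≤ (k - 1) * (m + n - (k - 1)) := by
  classical
  set s := ((Finset.Icc 1 m) ×ˢ (Finset.Icc 1 n)).filter (fun p => A p.1 p.2 = true) with hs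
  have hmem : ∀ p ∈ s, chainEnd A p.1 p.2 ∈ Finset.Icc 1 (k - 1) := by
    intro p hp
    simp only [hs, Finset.mem_filter, Finset.mem_product, Finset.mem_Icc] at hp
    simp only [Finset.mem_Icc]
    exact ⟨one_le_chainEnd A _ _,
      chainEnd_le_of_avoid hav (by omega) hp.1.1.1 hp.1.1.2 hp.1.2.1 hp.1.2.2 hp.2⟩
  have hcard := Finset.card_eq_sum_card_fiberwise hmem
  have hfiber : ∀ ℓ ∈ Finset.Icc 1 (k - 1),
      (s.filter (fun p => chainEnd A p.1 p.2 = ℓ)).card ≤ m + n + 1 - 2 * ℓ := by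
    intro ℓ hℓ
    simp only [Finset.mem_Icc] at hℓ
    have hinj : ∀ p ∈ s.filter (fun p => chainEnd A p.1 p.2 = ℓ),
        ((p.1 : ℤ) - p.2) ∈ Finset.Icc ((ℓ : ℤ) - n) ((m : ℤ) - ℓ) := by
      intro p hp
      simp only [hs, Finset.mem_filter, Finset.mem_product, Finset.mem_Icc] at hp
      obtain ⟨⟨⟨⟨h1, h2⟩, h3, h4⟩, -⟩, hL⟩ := hp
      have hi : ℓ ≤ p.1 := hL ▸ chainEnd_le_fst A p.1 p.2 h1
      have hj : ℓ ≤ p.2 := hL ▸ chainEnd_le_snd A p.1 p.2 h3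
      simp only [Finset.mem_Icc]
      constructor <;> omega
    have := Finset.card_le_card_of_injOn (fun p : ℕ × ℕ => ((p.1 : ℤ) - p.2)) hinj ?_
    · have hcard2 : (Finset.Icc ((ℓ : ℤ) - n) ((m : ℤ) - ℓ)).card = m + n + 1 - 2 * ℓ := by
        rw [Int.card_Icc]
        have : ((m : ℤ) - ℓ + 1 - ((ℓ : ℤ) - n)) = ((m + n + 1 - 2 * ℓ : ℕ) : ℤ) := by
          push_cast; omega
        rw [this, Int.toNat_natCast]
      omega
    · intro p hp q hq hpq
      have hpq' : (p.1 : ℤ) - p.2 = (q.1 : ℤ) - q.2 := hpq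
      simp only [Finset.mem_coe, hs, Finset.mem_filter, Finset.mem_product,
        Finset.mem_Icc] at hp hq
      obtain ⟨⟨⟨⟨hp1, -⟩, hp3, -⟩, hpA⟩, hpL⟩ := hp
      obtain ⟨⟨⟨⟨hq1, -⟩, hq3, -⟩, hqA⟩, hqL⟩ := hq
      by_contra hne
      have hne1 : p.1 ≠ q.1 := by
        intro h
        exact hne (Prod.ext h (by omega))
      rcases Nat.lt_or_ge p.1 q.1 with h | h
      · have hjj : p.2 < q.2 := by omega
        have := chainEnd_lt A hpA hp1 hp3 h hjj
        omega
      · have h' : q.1 < p.1 := by omega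
        have hjj : q.2 < p.2 := by omega
        have := chainEnd_lt A hqA hq1 hq3 h' hjj
        omega
  calc onesCount m n A = ∑ ℓ ∈ Finset.Icc 1 (k - 1),
          (s.filter (fun p => chainEnd A p.1 p.2 = ℓ)).card := hcard
    _ ≤ ∑ ℓ ∈ Finset.Icc 1 (k - 1), (m + n + 1 - 2 * ℓ) :=
        Finset.sum_le_sum hfiber
    _ = (k - 1) * (m + n - (k - 1)) := sum_arith (m + n) (k - 1) (by omega)

lemma construction (m n k : ℕ) (hk : 3 ≤ k) (hm : k ≤ m) (hn : k ≤ n) :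
    AvoidId m n k (fun i j => decide (i ≤ k - 1 ∨ j ≤ k - 1)) ∧
    onesCount m n (fun i j => decide (i ≤ k - 1 ∨ j ≤ k - 1)) =
      (k - 1) * (m + n - (k - 1)) := by
  constructor
  · rintro ⟨r, c, hmono, hbd, hA⟩
    have key : ∀ t, t < k → t + 1 ≤ r t ∧ t + 1 ≤ c t := by
      intro t
      induction t with
      | zero => intro h0; have := hbd 0 h0; omega
      | succ t ih =>
        intro ht
        have h1 := ih (by omega)
        have h2 := hmono t (by omega)
        omega
    have hk1 := key (k - 1) (by omega)
    have hAk := hA (k - 1) (by omega)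
    simp only [decide_eq_true_eq] at hAk
    omega
  · unfold onesCount
    have hsplit := Finset.card_filter_add_card_filter_not
      (s := (Finset.Icc 1 m) ×ˢ (Finset.Icc 1 n))
      (p := fun p : ℕ × ℕ => (decide (p.1 ≤ k - 1 ∨ p.2 ≤ k - 1)) = true)
    have hneg : ((Finset.Icc 1 m) ×ˢ (Finset.Icc 1 n)).filter
        (fun p : ℕ × ℕ => ¬ ((decide (p.1 ≤ k - 1 ∨ p.2 ≤ k - 1)) = true)) =
        (Finset.Icc k m) ×ˢ (Finset.Icc k n) := by
      ext p
      simp only [Finset.mem_filter, Finset.mem_product, Finset.mem_Icc,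
        decide_eq_true_eq]
      omega
    rw [hneg] at hsplit
    have htot : ((Finset.Icc 1 m) ×ˢ (Finset.Icc 1 n)).card = m * n := by
      rw [Finset.card_product, Nat.card_Icc, Nat.card_Icc]
      simp
    have hcomp : ((Finset.Icc k m) ×ˢ (Finset.Icc k n)).card =
        (m - (k - 1)) * (n - (k - 1)) := by
      rw [Finset.card_product, Nat.card_Icc, Nat.card_Icc]
      congr 1 <;> omega
    rw [htot, hcomp] at hsplit
    obtain ⟨x, hx⟩ : ∃ x, m = (k - 1) + x := ⟨m - (k - 1), by omega⟩
    obtain ⟨y, hy⟩ : ∃ y, n = (k - 1) + y := ⟨n - (k - 1), by omega⟩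
    have e1 : m - (k - 1) = x := by omega
    have e2 : n - (k - 1) = y := by omega
    have e3 : m + n - (k - 1) = (k - 1) + x + y := by omega
    rw [e1, e2] at hsplit
    rw [e3]
    have e4 : m * n = x * y + (k - 1) * ((k - 1) + x + y) := by rw [hx, hy]; ring
    have hbeta : (((Finset.Icc 1 m) ×ˢ (Finset.Icc 1 n)).filter
        (fun p : ℕ × ℕ => (fun i j => decide (i ≤ k - 1 ∨ j ≤ k - 1)) p.1 p.2 = true)) =
        (((Finset.Icc 1 m) ×ˢ (Finset.Icc 1 n)).filter
        (fun p : ℕ × ℕ => (decide (p.1 ≤ k - 1 ∨ p.2 ≤ k - 1)) = true)) := rfl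
    rw [hbeta]
    omega


theorem stmt_6 (m n k : ℕ) (hk : 3 ≤ k) (hm : k ≤ m) (hn : k ≤ n) :
    (∃ A : ℕ → ℕ → Bool, AvoidId m n k A ∧
      onesCount m n A = (k - 1) * (m + n - (k - 1))) ∧
    IsGreatest {c : ℕ | ∃ A : ℕ → ℕ → Bool, AvoidId m n k A ∧ onesCount m n A = c}
      ((k - 1) * (m + n - (k - 1))) := by
  obtain ⟨hav, hcnt⟩ := construction m n k hk hm hn
  refine ⟨⟨_, hav, hcnt⟩, ⟨_, hav, hcnt⟩, ?_⟩
  rintro c ⟨A, hA, rfl⟩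
  exact upper_bound hk hm hn hA
end

section
/- Let m, n, k be integers with m, n ≥ k ≥ 3, and let A be a 12⋯k-avoiding m×n (0,1)-matrix with exactly (k−1)(m + n − (k−1)) ones. Then the set of positions of the 1's of A can be partitioned into k−1 pairwise disjoint sets S₁, …, S_{k−1} such that for each t = 1,…,k−1, the set S_t is an R-L zigzag path of length m + n − (2t − 1). -/
/-- The set of positions of the 1's of an `m × n` (0,1)-matrix `A` (1-indexed). -/
def onesSet (m n : ℕ) (A : ℕ → ℕ → Bool) : Finset (ℕ × ℕ) :=
  ((Finset.Icc 1 m) ×ˢ (Finset.Icc 1 n)).filter fun p => A p.1 p.2 = true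

/-- `S` is an R-L zigzag path of length `ℓ`: it lives in a `{u,…,p} × {v,…,q}`
window, contains `(u,q)` and `(p,v)`, has `ℓ = (p-u)+(q-v)+1` elements, and every
element other than `(p,v)` has exactly one of its left neighbor and its lower
neighbor in `S`. -/
def IsRLZigzagPath (S : Finset (ℕ × ℕ)) (ℓ : ℕ) : Prop :=
  ∃ u p v q : ℕ, u ≤ p ∧ v ≤ q ∧
    (∀ x ∈ S, u ≤ x.1 ∧ x.1 ≤ p ∧ v ≤ x.2 ∧ x.2 ≤ q) ∧
    (u, q) ∈ S ∧ (p, v) ∈ S ∧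
    S.card = ℓ ∧ ℓ = (p - u) + (q - v) + 1 ∧
    ∀ x ∈ S, x ≠ (p, v) → Xor' ((x.1, x.2 - 1) ∈ S) ((x.1 + 1, x.2) ∈ S)


def chainLen (m n : ℕ) (A : ℕ → ℕ → Bool) (i j : ℕ) : ℕ :=
  1 + (((onesSet m n A).filter fun p => p.1 < i ∧ p.2 < j).attach.sup
        fun p => chainLen m n A p.1.1 p.1.2)
termination_by i
decreasing_by
  have := p.2
  simp only [Finset.mem_filter] at this
  omega

lemma chainLen_eq (m n : ℕ) (A : ℕ → ℕ → Bool) (i j : ℕ) :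
    chainLen m n A i j =
      1 + (((onesSet m n A).filter fun p => p.1 < i ∧ p.2 < j).attach.sup
        fun p => chainLen m n A p.1.1 p.1.2) := by
  rw [chainLen]

lemma one_le_chainLen (m n : ℕ) (A : ℕ → ℕ → Bool) (i j : ℕ) :
    1 ≤ chainLen m n A i j := by
  rw [chainLen_eq]; omega

lemma mem_onesSet {m n : ℕ} {A : ℕ → ℕ → Bool} {x : ℕ × ℕ} (hx : x ∈ onesSet m n A) :
    1 ≤ x.1 ∧ x.1 ≤ m ∧ 1 ≤ x.2 ∧ x.2 ≤ n ∧ A x.1 x.2 = true := by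
  simp only [onesSet, Finset.mem_filter, Finset.mem_product, Finset.mem_Icc] at hx
  tauto

lemma chainLen_lt {m n : ℕ} {A : ℕ → ℕ → Bool} {x y : ℕ × ℕ}
    (hx : x ∈ onesSet m n A) (h1 : x.1 < y.1) (h2 : x.2 < y.2) :
    chainLen m n A x.1 x.2 < chainLen m n A y.1 y.2 := by
  rw [chainLen_eq m n A y.1 y.2]
  have hmem : x ∈ (onesSet m n A).filter fun p => p.1 < y.1 ∧ p.2 < y.2 := by
    simp only [Finset.mem_filter]; exact ⟨hx, h1, h2⟩
  have h : chainLen m n A x.1 x.2 ≤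
      ((onesSet m n A).filter fun p => p.1 < y.1 ∧ p.2 < y.2).attach.sup
        (fun p => chainLen m n A p.1.1 p.1.2) :=
    by set F := (onesSet m n A).filter fun p => p.1 < y.1 ∧ p.2 < y.2 with hF; exact Finset.le_sup (f := fun p : {p // p ∈ F} => chainLen m n A p.1.1 p.1.2) (Finset.mem_attach F ⟨x, hmem⟩)
  omega

lemma chainLen_le_min {m n : ℕ} {A : ℕ → ℕ → Bool} :
    ∀ i j, (i, j) ∈ onesSet m n A → chainLen m n A i j ≤ i ∧ chainLen m n A i j ≤ j := by
  intro i
  induction i using Nat.strong_induction_on with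
  | _ i IH =>
    intro j hij
    have h1 := (mem_onesSet hij).1
    have h2 := (mem_onesSet hij).2.2.1
    rw [chainLen_eq]
    constructor <;>
    · have : (((onesSet m n A).filter fun p => p.1 < i ∧ p.2 < j).attach.sup
          fun p => chainLen m n A p.1.1 p.1.2) ≤ min i j - 1 := by
        apply Finset.sup_le
        intro p _
        have hp := p.2
        simp only [Finset.mem_filter] at hp
        have := IH p.1.1 hp.2.1 p.1.2 (by rw [Prod.mk.eta]; exact hp.1)
        omega
      omega

/-- existence of a chain of length `L+1` ending at `(i,j)`. -/
lemma chain_exists {m n : ℕ} {A : ℕ → ℕ → Bool} :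
    ∀ L i j, (i, j) ∈ onesSet m n A → L + 1 ≤ chainLen m n A i j →
    ∃ r c : ℕ → ℕ,
      (∀ t, t + 1 < L + 1 → r t < r (t + 1) ∧ c t < c (t + 1)) ∧
      (∀ t, t < L + 1 → 1 ≤ r t ∧ r t ≤ m ∧ 1 ≤ c t ∧ c t ≤ n) ∧
      (∀ t, t < L + 1 → A (r t) (c t) = true) ∧ r L = i ∧ c L = j := by
  intro L
  induction L with
  | zero =>
    intro i j hij _
    refine ⟨fun _ => i, fun _ => j, by omega, ?_, ?_, rfl, rfl⟩
    · intro t _; have := mem_onesSet hij; tauto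
    · intro t _; exact (mem_onesSet hij).2.2.2.2
  | succ L IH =>
    intro i j hij hlen
    rw [chainLen_eq] at hlen
    set F := (onesSet m n A).filter fun p => p.1 < i ∧ p.2 < j with hF
    have hne : F.attach.Nonempty := by
      by_contra h
      rw [Finset.not_nonempty_iff_eq_empty] at h
      rw [h] at hlen
      simp at hlen
    obtain ⟨p, _, hp⟩ := Finset.exists_mem_eq_sup F.attach hne
      (fun p => chainLen m n A p.1.1 p.1.2)
    have hpmem := p.2
    simp only [hF, Finset.mem_filter] at hpmem
    have hp1 : (p.1.1, p.1.2) ∈ onesSet m n A := by rw [Prod.mk.eta]; exact hpmem.1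
    have hplen : L + 1 ≤ chainLen m n A p.1.1 p.1.2 := by omega
    obtain ⟨r, c, hinc, hbd, hone, hrL, hcL⟩ := IH p.1.1 p.1.2 hp1 hplen
    refine ⟨fun t => if t = L + 1 then i else r t, fun t => if t = L + 1 then j else c t,
      ?_, ?_, ?_, by simp, by simp⟩
    · intro t ht
      dsimp only
      by_cases h : t + 1 = L + 1
      · have ht' : t = L := by omega
        rw [ht', if_neg (by omega), if_pos (by omega), if_neg (by omega), if_pos (by omega),
          hrL, hcL]
        exact ⟨hpmem.2.1, hpmem.2.2⟩
      · rw [if_neg (by omega), if_neg h, if_neg (by omega), if_neg h]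
        exact hinc t (by omega)
    · intro t ht
      dsimp only
      by_cases h : t = L + 1
      · rw [if_pos h, if_pos h]; have := mem_onesSet hij; tauto
      · rw [if_neg h, if_neg h]; exact hbd t (by omega)
    · intro t ht
      dsimp only
      by_cases h : t = L + 1
      · rw [if_pos h, if_pos h]; exact (mem_onesSet hij).2.2.2.2
      · rw [if_neg h, if_neg h]; exact hone t (by omega)


lemma sum_id (c K : ℕ) (h : 2 * K ≤ c) :
    ∑ t ∈ Finset.Icc 1 K, (c - (2 * t - 1)) = K * (c - K) := by
  induction K with
  | zero => simp
  | succ K IH =>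
    rw [Finset.sum_Icc_succ_top (by omega : 1 ≤ K + 1), IH (by omega)]
    have h1 : K ≤ c := by omega
    have h2 : K + 1 ≤ c := by omega
    have h3 : 2 * (K + 1) - 1 ≤ c := by omega
    have h4 : (1:ℕ) ≤ 2 * (K + 1) := by omega
    zify [h1, h2, h3, h4]
    ring

lemma zigzag_of_maximal (S : Finset (ℕ × ℕ)) (u p v q : ℕ)
    (hu : u ≤ p) (hv : v ≤ q) (hv1 : 1 ≤ v)
    (hwin : ∀ x ∈ S, u ≤ x.1 ∧ x.1 ≤ p ∧ v ≤ x.2 ∧ x.2 ≤ q)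
    (havoid : ∀ x ∈ S, ∀ y ∈ S, x.1 < y.1 → x.2 < y.2 → False)
    (hcard : S.card = (p - u) + (q - v) + 1) :
    IsRLZigzagPath S ((p - u) + (q - v) + 1) := by
  classical
  set D := (p - u) + (q - v) with hD
  set φ : ℕ × ℕ → ℕ := fun x => (x.1 - u) + (q - x.2) with hφ
  -- injectivity on S
  have hinj : Set.InjOn φ S := by
    intro x hx y hy hxy
    have hwx := hwin x hx
    have hwy := hwin y hy
    have hav1 : ¬ (x.1 < y.1 ∧ x.2 < y.2) := fun ⟨h1, h2⟩ => havoid x hx y hy h1 h2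
    have hav2 : ¬ (y.1 < x.1 ∧ y.2 < x.2) := fun ⟨h1, h2⟩ => havoid y hy x hx h1 h2
    simp only [hφ] at hxy
    have : x.1 = y.1 ∧ x.2 = y.2 := by omega
    exact Prod.ext this.1 this.2
  have himg : S.image φ = Finset.range (D + 1) := by
    apply Finset.eq_of_subset_of_card_le
    · intro d hd
      simp only [Finset.mem_image] at hd
      obtain ⟨x, hx, rfl⟩ := hd
      have := hwin x hx
      simp only [Finset.mem_range, hφ]
      omega
    · rw [Finset.card_image_of_injOn hinj, hcard, Finset.card_range]
  have hsurj : ∀ d, d ≤ D → ∃ x ∈ S, φ x = d := by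
    intro d hd
    have : d ∈ S.image φ := by rw [himg]; simp; omega
    simpa [Finset.mem_image] using this
  -- endpoint (u, q)
  have huq : (u, q) ∈ S := by
    obtain ⟨x, hx, hx0⟩ := hsurj 0 (by omega)
    have hw := hwin x hx
    have : x = (u, q) := by
      have : x.1 = u ∧ x.2 = q := by simp only [hφ] at hx0; omega
      exact Prod.ext this.1 this.2
    rwa [← this]
  -- characterization of φ x = D
  have hDchar : ∀ x ∈ S, φ x = D → x = (p, v) := by
    intro x hx hxD
    have hw := hwin x hx
    have : x.1 = p ∧ x.2 = v := by simp only [hφ, hD] at hxD ⊢; omega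
    exact Prod.ext this.1 this.2
  have hpv : (p, v) ∈ S := by
    obtain ⟨x, hx, hxD⟩ := hsurj D (by omega)
    rw [← hDchar x hx hxD]; exact hx
  refine ⟨u, p, v, q, hu, hv, hwin, huq, hpv, hcard, rfl, ?_⟩
  intro x hx hxne
  have hw := hwin x hx
  have hxD : φ x < D := by
    have h1 : φ x ≤ D := by simp only [hφ]; omega
    rcases Nat.lt_or_ge (φ x) D with h | h
    · exact h
    · exact absurd (hDchar x hx (by omega)) hxne
  obtain ⟨y, hy, hyφ⟩ := hsurj (φ x + 1) (by omega)
  have hwy := hwin y hy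
  have hav1 : ¬ (x.1 < y.1 ∧ x.2 < y.2) := fun ⟨h1, h2⟩ => havoid x hx y hy h1 h2
  have hav2 : ¬ (y.1 < x.1 ∧ y.2 < x.2) := fun ⟨h1, h2⟩ => havoid y hy x hx h1 h2
  have hcases : (y.1 = x.1 ∧ y.2 = x.2 - 1 ∧ v + 1 ≤ x.2) ∨ (y.1 = x.1 + 1 ∧ y.2 = x.2) := by
    simp only [hφ] at hyφ
    omega
  -- not both neighbors in S
  have hnotboth : ¬ (((x.1, x.2 - 1) ∈ S) ∧ ((x.1 + 1, x.2) ∈ S)) := by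
    rintro ⟨hl, hr⟩
    have hwl := hwin _ hl
    have hwr := hwin _ hr
    have hφl : φ (x.1, x.2 - 1) = φ x + 1 := by simp only [hφ]; omega
    have hφr : φ (x.1 + 1, x.2) = φ x + 1 := by simp only [hφ]; omega
    have := hinj hl hr (by rw [hφl, hφr])
    simp at this
  rcases hcases with ⟨h1, h2, h3⟩ | ⟨h1, h2⟩
  · left
    constructor
    · have : (x.1, x.2 - 1) = y := by
        apply Prod.ext <;> simp [h1, h2]
      rwa [this]
    · intro hr
      exact hnotboth ⟨by
        have : (x.1, x.2 - 1) = y := Prod.ext (by simp [h1]) (by simp [h2])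
        rwa [this], hr⟩
  · right
    constructor
    · have : (x.1 + 1, x.2) = y := Prod.ext (by simp [h1]) (by simp [h2])
      rwa [this]
    · intro hl
      exact hnotboth ⟨hl, by
        have : (x.1 + 1, x.2) = y := Prod.ext (by simp [h1]) (by simp [h2])
        rwa [this]⟩

theorem stmt_7 (m n k : ℕ) (hk : 3 ≤ k) (hm : k ≤ m) (hn : k ≤ n)
    (A : ℕ → ℕ → Bool) (hA : AvoidId m n k A)
    (hcard : (onesSet m n A).card = (k - 1) * (m + n - (k - 1))) :
    ∃ S : ℕ → Finset (ℕ × ℕ),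
      (∀ t₁ t₂ : ℕ, 1 ≤ t₁ → t₁ < t₂ → t₂ ≤ k - 1 → Disjoint (S t₁) (S t₂)) ∧
      (Finset.Icc 1 (k - 1)).biUnion S = onesSet m n A ∧
      ∀ t : ℕ, 1 ≤ t → t ≤ k - 1 →
        IsRLZigzagPath (S t) (m + n - (2 * t - 1)) := by
  classical
  set S : ℕ → Finset (ℕ × ℕ) :=
    fun t => (onesSet m n A).filter (fun x => chainLen m n A x.1 x.2 = t) with hS
  -- chainLen bounded by k - 1 on ones
  have hbound : ∀ x ∈ onesSet m n A, chainLen m n A x.1 x.2 ≤ k - 1 := by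
    intro x hx
    by_contra h
    push_neg at h
    have hk' : (k - 1) + 1 ≤ chainLen m n A x.1 x.2 := by omega
    obtain ⟨r, c, hinc, hbd, hone, _, _⟩ :=
      chain_exists (k - 1) x.1 x.2 (by rw [Prod.mk.eta]; exact hx) hk'
    exact hA ⟨r, c,
      fun t ht => hinc t (by omega),
      fun t ht => hbd t (by omega),
      fun t ht => hone t (by omega)⟩
  -- disjointness
  have hdisj : ∀ t₁ t₂ : ℕ, t₁ ≠ t₂ → Disjoint (S t₁) (S t₂) := by
    intro t₁ t₂ hne
    apply Finset.disjoint_left.2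
    intro x hx1 hx2
    simp only [hS, Finset.mem_filter] at hx1 hx2
    exact hne (hx1.2 ▸ hx2.2)
  -- union
  have hunion : (Finset.Icc 1 (k - 1)).biUnion S = onesSet m n A := by
    ext x
    simp only [Finset.mem_biUnion, hS, Finset.mem_filter, Finset.mem_Icc]
    constructor
    · rintro ⟨t, _, hx, _⟩; exact hx
    · intro hx
      exact ⟨chainLen m n A x.1 x.2, ⟨one_le_chainLen m n A x.1 x.2, hbound x hx⟩, hx, rfl⟩
  -- window facts for each level
  have hwin : ∀ t, ∀ x ∈ S t, t ≤ x.1 ∧ x.1 ≤ m ∧ t ≤ x.2 ∧ x.2 ≤ n := by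
    intro t x hx
    simp only [hS, Finset.mem_filter] at hx
    have h1 := mem_onesSet hx.1
    have h2 := chainLen_le_min x.1 x.2 (by rw [Prod.mk.eta]; exact hx.1)
    omega
  -- 12-avoidance within each level
  have hav : ∀ t, ∀ x ∈ S t, ∀ y ∈ S t, x.1 < y.1 → x.2 < y.2 → False := by
    intro t x hx y hy h1 h2
    simp only [hS, Finset.mem_filter] at hx hy
    have := chainLen_lt hx.1 h1 h2
    omega
  -- card bound for each level
  have hcardle : ∀ t ∈ Finset.Icc 1 (k - 1), (S t).card ≤ m + n - (2 * t - 1) := by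
    intro t ht
    simp only [Finset.mem_Icc] at ht
    have h1 : t ≤ m := by omega
    have h2 : t ≤ n := by omega
    have : (S t).card ≤ (Finset.range ((m - t) + (n - t) + 1)).card := by
      apply Finset.card_le_card_of_injOn (fun x => (x.1 - t) + (n - x.2))
      · intro x hx
        have := hwin t x hx
        simp only [Finset.mem_coe, Finset.mem_range]
        omega
      · intro x hx y hy hxy
        have hwx := hwin t x hx
        have hwy := hwin t y hy
        have hav1 : ¬ (x.1 < y.1 ∧ x.2 < y.2) := fun ⟨a, b⟩ => hav t x hx y hy a b
        have hav2 : ¬ (y.1 < x.1 ∧ y.2 < x.2) := fun ⟨a, b⟩ => hav t y hy x hx a b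
        simp only at hxy
        have : x.1 = y.1 ∧ x.2 = y.2 := by omega
        exact Prod.ext this.1 this.2
    rw [Finset.card_range] at this
    omega
  -- total count
  have hsum : ∑ t ∈ Finset.Icc 1 (k - 1), (S t).card = ∑ t ∈ Finset.Icc 1 (k - 1), (m + n - (2 * t - 1)) := by
    have hbi : ((Finset.Icc 1 (k - 1)).biUnion S).card = ∑ t ∈ Finset.Icc 1 (k - 1), (S t).card :=
      Finset.card_biUnion (fun t₁ _ t₂ _ hne => hdisj t₁ t₂ hne)
    rw [hunion] at hbi
    rw [← hbi, hcard, sum_id (m + n) (k - 1) (by omega)]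
  -- exact card for each level
  have hcardeq : ∀ t ∈ Finset.Icc 1 (k - 1), (S t).card = m + n - (2 * t - 1) := by
    intro t ht
    exact ((Finset.sum_eq_sum_iff_of_le hcardle).1 hsum t ht)
  refine ⟨S, fun t₁ t₂ _ hlt _ => hdisj t₁ t₂ (by omega), hunion, ?_⟩
  intro t ht1 ht2
  have h1 : t ≤ m := by omega
  have h2 : t ≤ n := by omega
  have hlen : m + n - (2 * t - 1) = (m - t) + (n - t) + 1 := by omega
  rw [hlen]
  apply zigzag_of_maximal (S t) t m t n h1 h2 ht1 (hwin t) (hav t)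
  rw [hcardeq t (by simp only [Finset.mem_Icc]; omega), hlen]
end

section
/- Let m, n, k be integers with m, n ≥ k ≥ 3. Every maximal 12⋯k-avoiding m×n (0,1)-matrix has exactly (k−1)(m + n − (k−1)) ones; in particular, all maximal 12⋯k-avoiding m×n (0,1)-matrices have the same number of 1's. -/
/-- The matrix obtained from `A` by changing the entry in position `(i, j)` to `1`. -/
def setOne (A : ℕ → ℕ → Bool) (i j : ℕ) : ℕ → ℕ → Bool :=
  fun i' j' => if i' = i ∧ j' = j then true else A i' j'

/-- `A` is maximal `12⋯k`-avoiding. -/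
def MaximalAvoidId (m n k : ℕ) (A : ℕ → ℕ → Bool) : Prop :=
  AvoidId m n k A ∧
    ∀ i j : ℕ, 1 ≤ i → i ≤ m → 1 ≤ j → j ≤ n → A i j = false →
      ¬ AvoidId m n k (setOne A i j)


namespace Stmt9

def predU (A : ℕ → ℕ → Bool) (i j : ℕ) : Finset (ℕ × ℕ) :=
  ((Finset.Icc 1 (i-1)) ×ˢ (Finset.Icc 1 (j-1))).filter fun p => A p.1 p.2 = true

lemma mem_predU {A : ℕ → ℕ → Bool} {i j : ℕ} {p : ℕ × ℕ} :
    p ∈ predU A i j ↔ 1 ≤ p.1 ∧ p.1 < i ∧ 1 ≤ p.2 ∧ p.2 < j ∧ A p.1 p.2 = true := by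
  simp only [predU, Finset.mem_filter, Finset.mem_product, Finset.mem_Icc]
  constructor
  · rintro ⟨⟨⟨h1, h2⟩, h3, h4⟩, h5⟩
    exact ⟨h1, by omega, h3, by omega, h5⟩
  · rintro ⟨h1, h2, h3, h4, h5⟩
    exact ⟨⟨⟨h1, by omega⟩, h3, by omega⟩, h5⟩

def uval (A : ℕ → ℕ → Bool) (i j : ℕ) : ℕ :=
  1 + (predU A i j).attach.sup fun p => uval A p.1.1 p.1.2
termination_by i
decreasing_by
  have h := mem_predU.mp p.2
  omega

lemma uval_eq (A : ℕ → ℕ → Bool) (i j : ℕ) :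
    uval A i j = 1 + (predU A i j).sup fun p => uval A p.1 p.2 := by
  rw [uval]
  exact congrArg (1 + ·) (Finset.sup_attach (predU A i j) (fun q : ℕ × ℕ => uval A q.1 q.2))

lemma uval_pos (A : ℕ → ℕ → Bool) (i j : ℕ) : 1 ≤ uval A i j := by
  rw [uval_eq]; omega

lemma uval_le_of_mem {A : ℕ → ℕ → Bool} {i j : ℕ} {p : ℕ × ℕ} (hp : p ∈ predU A i j) :
    uval A p.1 p.2 + 1 ≤ uval A i j := by
  rw [uval_eq A i j]
  have h : uval A p.1 p.2 ≤ (predU A i j).sup fun q : ℕ × ℕ => uval A q.1 q.2 :=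
    Finset.le_sup (f := fun q : ℕ × ℕ => uval A q.1 q.2) hp
  omega

lemma uval_succ_of_one {A : ℕ → ℕ → Bool} {a b i j : ℕ} (h1 : A a b = true)
    (ha : 1 ≤ a) (hai : a < i) (hb : 1 ≤ b) (hbj : b < j) :
    uval A a b + 1 ≤ uval A i j :=
  uval_le_of_mem (p := (a, b)) (mem_predU.mpr ⟨ha, hai, hb, hbj, h1⟩)

lemma uval_mono {A : ℕ → ℕ → Bool} {i j i' j' : ℕ} (hi : i ≤ i') (hj : j ≤ j') :
    uval A i j ≤ uval A i' j' := by
  rw [uval_eq A i j, uval_eq A i' j']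
  have hsub : predU A i j ⊆ predU A i' j' := by
    intro p hp
    rw [mem_predU] at hp ⊢
    exact ⟨hp.1, by omega, hp.2.2.1, by omega, hp.2.2.2.2⟩
  have := Finset.sup_mono (f := fun p : ℕ × ℕ => uval A p.1 p.2) hsub
  omega

lemma uval_le_of_forall {A : ℕ → ℕ → Bool} {i j t : ℕ}
    (h : ∀ p ∈ predU A i j, uval A p.1 p.2 ≤ t) : uval A i j ≤ t + 1 := by
  rw [uval_eq]
  have : ((predU A i j).sup fun p : ℕ × ℕ => uval A p.1 p.2) ≤ t := Finset.sup_le h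
  omega

lemma uval_le_row {A : ℕ → ℕ → Bool} : ∀ i j, 1 ≤ i → uval A i j ≤ i := by
  intro i
  induction i using Nat.strong_induction_on with
  | _ i ih =>
    intro j hi
    refine le_trans (uval_le_of_forall (t := i - 1) fun p hp => ?_) (by omega)
    rw [mem_predU] at hp
    have := ih p.1 (by omega) p.2 (by omega)
    omega

lemma uval_le_col {A : ℕ → ℕ → Bool} : ∀ j i, 1 ≤ j → uval A i j ≤ j := by
  intro j
  induction j using Nat.strong_induction_on with
  | _ j ih =>
    intro i hj
    refine le_trans (uval_le_of_forall (t := j - 1) fun p hp => ?_) (by omega)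
    rw [mem_predU] at hp
    have := ih p.2 (by omega) p.1 (by omega)
    omega

lemma uval_exists {A : ℕ → ℕ → Bool} {i j s : ℕ} (hs : 1 ≤ s)
    (h : s + 1 ≤ uval A i j) : ∃ p ∈ predU A i j, s ≤ uval A p.1 p.2 := by
  rw [uval_eq] at h
  have hne : (predU A i j).Nonempty := by
    rcases Finset.eq_empty_or_nonempty (predU A i j) with he | hne
    · rw [he] at h; simp at h; omega
    · exact hne
  obtain ⟨p, hp, hsup⟩ := Finset.exists_mem_eq_sup _ hne (fun p : ℕ × ℕ => uval A p.1 p.2)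
  refine ⟨p, hp, ?_⟩
  have : ((predU A i j).sup fun p : ℕ × ℕ => uval A p.1 p.2) = uval A p.1 p.2 := hsup
  omega

/-! ### downward version -/

def predD (m n : ℕ) (A : ℕ → ℕ → Bool) (i j : ℕ) : Finset (ℕ × ℕ) :=
  ((Finset.Icc (i+1) m) ×ˢ (Finset.Icc (j+1) n)).filter fun p => A p.1 p.2 = true

lemma mem_predD {m n : ℕ} {A : ℕ → ℕ → Bool} {i j : ℕ} {p : ℕ × ℕ} :
    p ∈ predD m n A i j ↔ i < p.1 ∧ p.1 ≤ m ∧ j < p.2 ∧ p.2 ≤ n ∧ A p.1 p.2 = true := by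
  simp only [predD, Finset.mem_filter, Finset.mem_product, Finset.mem_Icc]
  constructor
  · rintro ⟨⟨⟨h1, h2⟩, h3, h4⟩, h5⟩
    exact ⟨by omega, h2, by omega, h4, h5⟩
  · rintro ⟨h1, h2, h3, h4, h5⟩
    exact ⟨⟨⟨by omega, h2⟩, by omega, h4⟩, h5⟩

def dval (m n : ℕ) (A : ℕ → ℕ → Bool) (i j : ℕ) : ℕ :=
  1 + (predD m n A i j).attach.sup fun p => dval m n A p.1.1 p.1.2
termination_by m + 1 - i
decreasing_by
  have h := mem_predD.mp p.2
  omega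

lemma dval_eq (m n : ℕ) (A : ℕ → ℕ → Bool) (i j : ℕ) :
    dval m n A i j = 1 + (predD m n A i j).sup fun p => dval m n A p.1 p.2 := by
  rw [dval]
  exact congrArg (1 + ·) (Finset.sup_attach (predD m n A i j) (fun q : ℕ × ℕ => dval m n A q.1 q.2))

lemma dval_pos (m n : ℕ) (A : ℕ → ℕ → Bool) (i j : ℕ) : 1 ≤ dval m n A i j := by
  rw [dval_eq]; omega

lemma dval_le_of_mem {m n : ℕ} {A : ℕ → ℕ → Bool} {i j : ℕ} {p : ℕ × ℕ}
    (hp : p ∈ predD m n A i j) : dval m n A p.1 p.2 + 1 ≤ dval m n A i j := by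
  rw [dval_eq m n A i j]
  have h : dval m n A p.1 p.2 ≤ (predD m n A i j).sup fun q : ℕ × ℕ => dval m n A q.1 q.2 :=
    Finset.le_sup (f := fun q : ℕ × ℕ => dval m n A q.1 q.2) hp
  omega

lemma dval_succ_of_one {m n : ℕ} {A : ℕ → ℕ → Bool} {a b i j : ℕ} (h1 : A a b = true)
    (hai : i < a) (ham : a ≤ m) (hbj : j < b) (hbn : b ≤ n) :
    dval m n A a b + 1 ≤ dval m n A i j :=
  dval_le_of_mem (p := (a, b)) (mem_predD.mpr ⟨hai, ham, hbj, hbn, h1⟩)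

lemma dval_anti {m n : ℕ} {A : ℕ → ℕ → Bool} {i j i' j' : ℕ} (hi : i ≤ i') (hj : j ≤ j') :
    dval m n A i' j' ≤ dval m n A i j := by
  rw [dval_eq m n A i j, dval_eq m n A i' j']
  have hsub : predD m n A i' j' ⊆ predD m n A i j := by
    intro p hp
    rw [mem_predD] at hp ⊢
    exact ⟨by omega, hp.2.1, by omega, hp.2.2.2.1, hp.2.2.2.2⟩
  have := Finset.sup_mono (f := fun p : ℕ × ℕ => dval m n A p.1 p.2) hsub
  omega

lemma dval_le_of_forall {m n : ℕ} {A : ℕ → ℕ → Bool} {i j t : ℕ}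
    (h : ∀ p ∈ predD m n A i j, dval m n A p.1 p.2 ≤ t) : dval m n A i j ≤ t + 1 := by
  rw [dval_eq]
  have : ((predD m n A i j).sup fun p : ℕ × ℕ => dval m n A p.1 p.2) ≤ t := Finset.sup_le h
  omega

lemma dval_le_row_aux {m n : ℕ} {A : ℕ → ℕ → Bool} : ∀ t i j, m - i ≤ t → i ≤ m →
    dval m n A i j ≤ m + 1 - i := by
  intro t
  induction t with
  | zero =>
    intro i j h1 h2
    refine le_trans (dval_le_of_forall (t := 0) fun p hp => ?_) (by omega)
    rw [mem_predD] at hp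
    omega
  | succ t ih =>
    intro i j h1 h2
    refine le_trans (dval_le_of_forall (t := m - i) fun p hp => ?_) (by omega)
    rw [mem_predD] at hp
    have := ih p.1 p.2 (by omega) (by omega)
    omega

lemma dval_le_row {m n : ℕ} {A : ℕ → ℕ → Bool} {i j : ℕ} (h : i ≤ m) :
    dval m n A i j ≤ m + 1 - i :=
  dval_le_row_aux (m - i) i j le_rfl h

lemma dval_le_col_aux {m n : ℕ} {A : ℕ → ℕ → Bool} : ∀ t i j, n - j ≤ t → j ≤ n →
    dval m n A i j ≤ n + 1 - j := by
  intro t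
  induction t with
  | zero =>
    intro i j h1 h2
    refine le_trans (dval_le_of_forall (t := 0) fun p hp => ?_) (by omega)
    rw [mem_predD] at hp
    omega
  | succ t ih =>
    intro i j h1 h2
    refine le_trans (dval_le_of_forall (t := n - j) fun p hp => ?_) (by omega)
    rw [mem_predD] at hp
    have := ih p.1 p.2 (by omega) (by omega)
    omega

lemma dval_le_col {m n : ℕ} {A : ℕ → ℕ → Bool} {i j : ℕ} (h : j ≤ n) :
    dval m n A i j ≤ n + 1 - j :=
  dval_le_col_aux (n - j) i j le_rfl h

lemma dval_exists {m n : ℕ} {A : ℕ → ℕ → Bool} {i j s : ℕ} (hs : 1 ≤ s)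
    (h : s + 1 ≤ dval m n A i j) : ∃ p ∈ predD m n A i j, s ≤ dval m n A p.1 p.2 := by
  rw [dval_eq] at h
  have hne : (predD m n A i j).Nonempty := by
    rcases Finset.eq_empty_or_nonempty (predD m n A i j) with he | hne
    · rw [he] at h; simp at h; omega
    · exact hne
  obtain ⟨p, hp, hsup⟩ := Finset.exists_mem_eq_sup _ hne (fun p : ℕ × ℕ => dval m n A p.1 p.2)
  refine ⟨p, hp, ?_⟩
  have : ((predD m n A i j).sup fun p : ℕ × ℕ => dval m n A p.1 p.2) = dval m n A p.1 p.2 := hsup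
  omega

end Stmt9

namespace Stmt9

lemma setOne_ne {A : ℕ → ℕ → Bool} {i j a b : ℕ} (h : setOne A i j a b = true)
    (hne : ¬(a = i ∧ b = j)) : A a b = true := by
  rw [setOne] at h
  simpa [hne] using h

lemma chain_mono {k : ℕ} {r c : ℕ → ℕ}
    (hinc : ∀ t, t + 1 < k → r t < r (t + 1) ∧ c t < c (t + 1)) :
    ∀ s', s' < k → ∀ s, s < s' → r s < r s' ∧ c s < c s' := by
  intro s'
  induction s' with
  | zero => omega
  | succ v ih =>
    intro hv s hs
    rcases Nat.lt_or_ge s v with h | h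
    · have h1 := ih (by omega) s h
      have h2 := hinc v hv
      exact ⟨by omega, by omega⟩
    · have hsv : s = v := by omega
      subst hsv
      exact hinc s hv

/-- From a large `uval` we can extract an increasing chain of ones ending at `(i,j)`. -/
lemma chain_ex {A : ℕ → ℕ → Bool} : ∀ s i j, 1 ≤ i → 1 ≤ j → A i j = true →
    s ≤ uval A i j →
    ∃ r c : ℕ → ℕ,
      (∀ t, t + 1 < s → r t < r (t + 1) ∧ c t < c (t + 1)) ∧
      (∀ t, t < s → 1 ≤ r t ∧ r t ≤ i ∧ 1 ≤ c t ∧ c t ≤ j) ∧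
      (∀ t, t < s → A (r t) (c t) = true) := by
  intro s
  induction s with
  | zero =>
    intro i j _ _ _ _
    exact ⟨fun _ => i, fun _ => j, by omega, by omega, by omega⟩
  | succ s ih =>
    intro i j hi hj h1 hu
    rcases Nat.eq_zero_or_pos s with hs | hs
    · subst hs
      refine ⟨fun _ => i, fun _ => j, by omega, ?_, ?_⟩
      · intro t ht; exact ⟨hi, le_rfl, hj, le_rfl⟩
      · intro t ht; exact h1
    · obtain ⟨p, hp, hps⟩ := uval_exists (A := A) (i := i) (j := j) hs (by omega)
      rw [mem_predU] at hp
      obtain ⟨r', c', hinc', hbd', hones'⟩ := ih p.1 p.2 hp.1 hp.2.2.1 hp.2.2.2.2 hps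
      refine ⟨fun t => if t < s then r' t else i, fun t => if t < s then c' t else j, ?_, ?_, ?_⟩
      · intro t ht
        dsimp only
        have hts : t < s := by omega
        rcases Nat.lt_or_ge (t+1) s with h | h
        · simp only [if_pos hts, if_pos h]
          exact hinc' t h
        · have hns : ¬ t + 1 < s := by omega
          simp only [if_pos hts, if_neg hns]
          have hb := hbd' t hts
          constructor
          · exact lt_of_le_of_lt hb.2.1 hp.2.1
          · exact lt_of_le_of_lt hb.2.2.2 hp.2.2.2.1
      · intro t ht
        dsimp only
        rcases Nat.lt_or_ge t s with h | h
        · simp only [if_pos h]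
          have hb := hbd' t h
          exact ⟨hb.1, by omega, hb.2.2.1, by omega⟩
        · have hns : ¬ t < s := by omega
          simp only [if_neg hns]
          exact ⟨hi, le_rfl, hj, le_rfl⟩
      · intro t ht
        dsimp only
        rcases Nat.lt_or_ge t s with h | h
        · simp only [if_pos h]; exact hones' t h
        · have hns : ¬ t < s := by omega
          simp only [if_neg hns]; exact h1

lemma avoid_uval_lt {m n k : ℕ} {A : ℕ → ℕ → Bool} (hAv : AvoidId m n k A)
    {i j : ℕ} (hi : 1 ≤ i) (him : i ≤ m) (hj : 1 ≤ j) (hjn : j ≤ n)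
    (h1 : A i j = true) : uval A i j < k := by
  by_contra h
  push_neg at h
  obtain ⟨r, c, hinc, hbd, hones⟩ := chain_ex k i j hi hj h1 h
  exact hAv ⟨r, c, hinc,
    fun t ht => ⟨(hbd t ht).1, le_trans (hbd t ht).2.1 him,
      (hbd t ht).2.2.1, le_trans (hbd t ht).2.2.2 hjn⟩, hones⟩

lemma sum_le_aux {m n k : ℕ} {A : ℕ → ℕ → Bool} (hAv : AvoidId m n k A) :
    ∀ b i j, 1 ≤ i → i ≤ m → 1 ≤ j → j ≤ n → A i j = true → b ≤ dval m n A i j →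
    ∃ p q, 1 ≤ p ∧ p ≤ m ∧ 1 ≤ q ∧ q ≤ n ∧ A p q = true ∧
      uval A i j + b ≤ uval A p q + 1 := by
  intro b
  induction b with
  | zero =>
    intro i j hi him hj hjn h1 _
    exact ⟨i, j, hi, him, hj, hjn, h1, by omega⟩
  | succ b ih =>
    intro i j hi him hj hjn h1 hd
    rcases Nat.eq_zero_or_pos b with hb | hb
    · subst hb
      exact ⟨i, j, hi, him, hj, hjn, h1, by omega⟩
    · obtain ⟨p, hp, hpd⟩ := dval_exists (m := m) (n := n) (A := A) (i := i) (j := j) hb (by omega)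
      rw [mem_predD] at hp
      obtain ⟨p', q', h's⟩ := ih p.1 p.2 (by omega) hp.2.1 (by omega) hp.2.2.2.1
        hp.2.2.2.2 hpd
      have hstep : uval A i j + 1 ≤ uval A p.1 p.2 :=
        uval_succ_of_one h1 hi hp.1 hj hp.2.2.1
      exact ⟨p', q', h's.1, h's.2.1, h's.2.2.1, h's.2.2.2.1, h's.2.2.2.2.1, by omega⟩

/-- ones satisfy `u + d ≤ k` -/
lemma one_sum_le {m n k : ℕ} {A : ℕ → ℕ → Bool} (hAv : AvoidId m n k A)
    {i j : ℕ} (hi : 1 ≤ i) (him : i ≤ m) (hj : 1 ≤ j) (hjn : j ≤ n)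
    (h1 : A i j = true) : uval A i j + dval m n A i j ≤ k := by
  obtain ⟨p, q, hp1, hpm, hq1, hqn, hpq, hle⟩ :=
    sum_le_aux hAv (dval m n A i j) i j hi him hj hjn h1 le_rfl
  have := avoid_uval_lt hAv hp1 hpm hq1 hqn hpq
  omega

/-- zeros in the grid of a maximal matrix satisfy `u + d ≥ k + 1` -/
lemma zero_sum_ge {m n k : ℕ} {A : ℕ → ℕ → Bool} (hA : MaximalAvoidId m n k A)
    {i j : ℕ} (hi : 1 ≤ i) (him : i ≤ m) (hj : 1 ≤ j) (hjn : j ≤ n)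
    (h0 : A i j = false) : k + 1 ≤ uval A i j + dval m n A i j := by
  have hnav := hA.2 i j hi him hj hjn h0
  rw [AvoidId] at hnav
  obtain ⟨r, c, hinc, hbd, hones⟩ := not_not.mp hnav
  -- the chain must pass through (i,j)
  have hhit : ∃ t, t < k ∧ r t = i ∧ c t = j := by
    by_contra hcon
    push_neg at hcon
    refine hA.1 ⟨r, c, hinc, hbd, fun t ht => ?_⟩
    refine setOne_ne (hones t ht) ?_
    intro ⟨ha, hb⟩
    exact (hcon t ht ha) hb
  obtain ⟨t, htk, hrt, hct⟩ := hhit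
  -- prefix: uval at (i,j) is at least t+1
  have hu : ∀ s, s ≤ t → s + 1 ≤ uval A (r s) (c s) := by
    intro s
    induction s with
    | zero => intro _; exact uval_pos A _ _
    | succ s ihs =>
      intro hst
      have h1s : A (r s) (c s) = true := by
        refine setOne_ne (hones s (by omega)) ?_
        intro ⟨ha, _⟩
        have := chain_mono hinc t htk s (by omega)
        omega
      have hb := hbd s (by omega)
      have hcons := hinc s (by omega)
      have := uval_succ_of_one h1s hb.1 hcons.1 hb.2.2.1 hcons.2
      have := ihs (by omega)
      omega
  -- suffix: dval at (i,j) is at least k - t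
  have hd : ∀ q s, s < k → t ≤ s → k - 1 - s ≤ q → k - s ≤ dval m n A (r s) (c s) := by
    intro q
    induction q with
    | zero =>
      intro s hsk hts hq
      have := dval_pos m n A (r s) (c s)
      omega
    | succ q ihq =>
      intro s hsk hts hq
      rcases le_or_gt (k - 1 - s) q with h | h
      · exact ihq s hsk hts h
      · have hs1k : s + 1 < k := by omega
        have h1s : A (r (s+1)) (c (s+1)) = true := by
          refine setOne_ne (hones (s+1) hs1k) ?_
          intro ⟨ha, _⟩
          have := chain_mono hinc (s+1) hs1k t (by omega)
          omega
        have hb := hbd (s+1) hs1k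
        have hcons := hinc s hs1k
        have hstep := dval_succ_of_one (m := m) (n := n) h1s hcons.1 hb.2.1 hcons.2 hb.2.2.2
        have := ihq (s+1) hs1k (by omega) (by omega)
        omega
  have h1 := hu t le_rfl
  have h2 := hd (k - 1 - t) t htk le_rfl le_rfl
  rw [hrt, hct] at h1 h2
  omega

end Stmt9

namespace Stmt9

/-- The set of columns of layer-`ℓ` ones in row `i`. -/
def layerS (n : ℕ) (A : ℕ → ℕ → Bool) (ℓ i : ℕ) : Finset ℕ :=
  ((Finset.Icc 1 n).filter fun j => A i j = true).filter fun j => uval A i j = ℓ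

lemma mem_layerS {n : ℕ} {A : ℕ → ℕ → Bool} {ℓ i j : ℕ} :
    j ∈ layerS n A ℓ i ↔ 1 ≤ j ∧ j ≤ n ∧ A i j = true ∧ uval A i j = ℓ := by
  simp only [layerS, Finset.mem_filter, Finset.mem_Icc]
  tauto

lemma layerS_ge {n : ℕ} {A : ℕ → ℕ → Bool} {ℓ i j : ℕ} (h : j ∈ layerS n A ℓ i) : ℓ ≤ j := by
  rw [mem_layerS] at h
  have := uval_le_col (A := A) j i h.1
  omega

section Main

variable {m n k : ℕ} {A : ℕ → ℕ → Bool} (hA : MaximalAvoidId m n k A)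
  (hk : 3 ≤ k) (hm : k ≤ m) (hn : k ≤ n)

include hA hk hm hn

lemma top_diag {ℓ : ℕ} (hl1 : 1 ≤ ℓ) (hlk : ℓ ≤ k - 1) :
    ∀ t, 1 ≤ t → t ≤ ℓ → A t (n - ℓ + t) = true ∧ t ≤ uval A t (n - ℓ + t) := by
  intro t
  induction t with
  | zero => omega
  | succ t ih =>
    intro h1 ht
    have hone : A (t+1) (n - ℓ + (t+1)) = true := by
      rcases Bool.eq_false_or_eq_true (A (t+1) (n - ℓ + (t+1))) with h1' | h0
      · exact h1'
      · exfalso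
        have hz := zero_sum_ge hA (by omega) (by omega) (by omega) (by omega) h0
        have hu := uval_le_row (A := A) (t+1) (n - ℓ + (t+1)) (by omega)
        have hd := dval_le_col (m := m) (n := n) (A := A) (i := t+1) (j := n - ℓ + (t+1))
          (by omega)
        omega
    refine ⟨hone, ?_⟩
    rcases Nat.eq_zero_or_pos t with h0 | h0
    · subst h0
      exact uval_pos A _ _
    · obtain ⟨hone', hu'⟩ := ih h0 (by omega)
      have := uval_succ_of_one (i := t+1) (j := n - ℓ + (t+1)) hone'
        (by omega) (by omega) (by omega) (by omega)
      omega

lemma top_mem {ℓ : ℕ} (hl1 : 1 ≤ ℓ) (hlk : ℓ ≤ k - 1) :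
    A ℓ n = true ∧ uval A ℓ n = ℓ := by
  have h := top_diag hA hk hm hn hl1 hlk ℓ hl1 le_rfl
  have he : n - ℓ + ℓ = n := by omega
  rw [he] at h
  have := uval_le_row (A := A) ℓ n hl1
  exact ⟨h.1, by omega⟩

lemma left_diag {ℓ : ℕ} (hl1 : 1 ≤ ℓ) (hlk : ℓ ≤ k - 1) :
    ∀ t, 1 ≤ t → t ≤ ℓ → A (m - ℓ + t) t = true ∧ t ≤ uval A (m - ℓ + t) t := by
  intro t
  induction t with
  | zero => omega
  | succ t ih =>
    intro h1 ht
    have hone : A (m - ℓ + (t+1)) (t+1) = true := by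
      rcases Bool.eq_false_or_eq_true (A (m - ℓ + (t+1)) (t+1)) with h1' | h0
      · exact h1'
      · exfalso
        have hz := zero_sum_ge hA (by omega) (by omega) (by omega) (by omega) h0
        have hu := uval_le_col (A := A) (t+1) (m - ℓ + (t+1)) (by omega)
        have hd := dval_le_row (m := m) (n := n) (A := A) (i := m - ℓ + (t+1)) (j := t+1)
          (by omega)
        omega
    refine ⟨hone, ?_⟩
    rcases Nat.eq_zero_or_pos t with h0 | h0
    · subst h0
      exact uval_pos A _ _
    · obtain ⟨hone', hu'⟩ := ih h0 (by omega)
      have := uval_succ_of_one (i := m - ℓ + (t+1)) (j := t+1) hone'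
        (by omega) (by omega) (by omega) (by omega)
      omega

lemma left_mem {ℓ : ℕ} (hl1 : 1 ≤ ℓ) (hlk : ℓ ≤ k - 1) :
    A m ℓ = true ∧ uval A m ℓ = ℓ := by
  have h := left_diag hA hk hm hn hl1 hlk ℓ hl1 le_rfl
  have he : m - ℓ + ℓ = m := by omega
  rw [he] at h
  have := uval_le_col (A := A) ℓ m hl1
  exact ⟨h.1, by omega⟩

/-- Key staircase step: the minimum layer-`ℓ` column of row `i` is a layer-`ℓ` one in
row `i+1`, and it bounds all layer-`ℓ` columns of row `i+1` from above. -/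
lemma overlap {ℓ i : ℕ} (hl1 : 1 ≤ ℓ) (hi1 : 1 ≤ i) (him : i + 1 ≤ m)
    (hne : (layerS n A ℓ i).Nonempty) :
    (layerS n A ℓ i).min' hne ∈ layerS n A ℓ (i+1) ∧
      ∀ q ∈ layerS n A ℓ (i+1), q ≤ (layerS n A ℓ i).min' hne := by
  have hj0mem := mem_layerS.mp (Finset.min'_mem _ hne)
  set j0 := (layerS n A ℓ i).min' hne with hj0def
  obtain ⟨h1j0, hj0n, hone0, huv0⟩ := hj0mem
  -- uval at (i+1, j0) is at most ℓ
  have hub : uval A (i+1) j0 ≤ ℓ := by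
    refine le_trans (uval_le_of_forall (t := ℓ - 1) ?_) (by omega)
    intro p hp
    rw [mem_predU] at hp
    obtain ⟨hp1, hpi, hp2, hpj, hpone⟩ := hp
    have hmono : uval A p.1 p.2 ≤ uval A i j0 := uval_mono (by omega) (by omega)
    by_contra hcon
    push_neg at hcon
    have heq : uval A p.1 p.2 = ℓ := by omega
    rcases Nat.lt_or_ge p.1 i with hlt | hge
    · have := uval_succ_of_one (i := i) (j := j0) hpone hp1 hlt hp2 (by omega)
      omega
    · have hpi' : p.1 = i := by omega
      have hmem : p.2 ∈ layerS n A ℓ i := by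
        rw [mem_layerS]
        rw [hpi'] at hpone heq
        exact ⟨hp2, by omega, hpone, heq⟩
      have := Finset.min'_le _ _ hmem
      omega
  have hlb : ℓ ≤ uval A (i+1) j0 := by
    have := uval_mono (A := A) (i := i) (j := j0) (by omega : i ≤ i + 1) le_rfl
    omega
  have hone1 : A (i+1) j0 = true := by
    rcases Bool.eq_false_or_eq_true (A (i+1) j0) with h1' | h0
    · exact h1'
    · exfalso
      have hz := zero_sum_ge hA (by omega) him h1j0 hj0n h0
      have hda : dval m n A (i+1) j0 ≤ dval m n A i j0 := dval_anti (by omega) le_rfl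
      have hsum := one_sum_le hA.1 hi1 (by omega) h1j0 hj0n hone0
      omega
  constructor
  · rw [mem_layerS]
    exact ⟨h1j0, hj0n, hone1, by omega⟩
  · intro q hq
    rw [mem_layerS] at hq
    by_contra hcon
    push_neg at hcon
    have := uval_succ_of_one (i := i+1) (j := q) hone0 hi1 (by omega : i < i + 1) h1j0 hcon
    omega

lemma layer_nonempty {ℓ : ℕ} (hl1 : 1 ≤ ℓ) (hlk : ℓ ≤ k - 1) :
    ∀ i, ℓ ≤ i → i ≤ m → (layerS n A ℓ i).Nonempty := by
  intro i
  induction i with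
  | zero => omega
  | succ i ih =>
    intro hl hi
    rcases Nat.lt_or_ge i ℓ with hc | hc
    · have he : i + 1 = ℓ := by omega
      rw [he]
      obtain ⟨h1, h2⟩ := top_mem hA hk hm hn hl1 hlk
      exact ⟨n, mem_layerS.mpr ⟨by omega, le_rfl, h1, h2⟩⟩
    · have hne := ih hc (by omega)
      exact ⟨_, (overlap hA hk hm hn hl1 (by omega) hi hne).1⟩

lemma layer_eq_Icc {ℓ i : ℕ} (hi1 : 1 ≤ i) (him : i ≤ m)
    (hne : (layerS n A ℓ i).Nonempty) :
    layerS n A ℓ i =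
      Finset.Icc ((layerS n A ℓ i).min' hne) ((layerS n A ℓ i).max' hne) := by
  have hminmem := mem_layerS.mp (Finset.min'_mem _ hne)
  have hmaxmem := mem_layerS.mp (Finset.max'_mem _ hne)
  ext j
  rw [mem_layerS, Finset.mem_Icc]
  constructor
  · intro h
    exact ⟨Finset.min'_le _ _ (mem_layerS.mpr h), Finset.le_max' _ _ (mem_layerS.mpr h)⟩
  · rintro ⟨hmin, hmax⟩
    have ha : uval A i ((layerS n A ℓ i).min' hne) ≤ uval A i j := uval_mono le_rfl hmin
    have hb : uval A i j ≤ uval A i ((layerS n A ℓ i).max' hne) := uval_mono le_rfl hmax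
    have huv : uval A i j = ℓ := by omega
    refine ⟨by omega, by omega, ?_, huv⟩
    rcases Bool.eq_false_or_eq_true (A i j) with h1' | h0
    · exact h1'
    · exfalso
      have hz := zero_sum_ge hA hi1 him (by omega) (by omega) h0
      have hda : dval m n A i j ≤ dval m n A i ((layerS n A ℓ i).min' hne) :=
        dval_anti le_rfl hmin
      have hsum := one_sum_le hA.1 hi1 him hminmem.1 hminmem.2.1 hminmem.2.2.1
      omega

omit hA hk hm hn in
lemma max'_eq_sup_id (s : Finset ℕ) (hne : s.Nonempty) : s.max' hne = s.sup id := by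
  rw [Finset.max'_eq_sup', Finset.sup'_eq_sup]

lemma layer_row_Icc {ℓ i : ℕ} (hl1 : 1 ≤ ℓ) (hlk : ℓ ≤ k - 1) (h1 : ℓ ≤ i) (h2 : i < m) :
    layerS n A ℓ i =
      Finset.Icc ((layerS n A ℓ (i+1)).sup id) ((layerS n A ℓ i).sup id) := by
  have hne := layer_nonempty hA hk hm hn hl1 hlk i h1 (by omega)
  obtain ⟨hov1, hov2⟩ := overlap hA hk hm hn hl1 (by omega) (by omega) hne
  have hsup : (layerS n A ℓ (i+1)).sup id = (layerS n A ℓ i).min' hne := by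
    refine le_antisymm (Finset.sup_le fun q hq => hov2 q hq) ?_
    exact Finset.le_sup (f := id) hov1
  rw [hsup, ← max'_eq_sup_id _ hne]
  exact layer_eq_Icc hA hk hm hn (by omega) (by omega) hne

lemma layer_row_Icc_last {ℓ : ℕ} (hl1 : 1 ≤ ℓ) (hlk : ℓ ≤ k - 1) :
    layerS n A ℓ m = Finset.Icc ℓ ((layerS n A ℓ m).sup id) := by
  have hne := layer_nonempty hA hk hm hn hl1 hlk m (by omega) le_rfl
  have hmin : (layerS n A ℓ m).min' hne = ℓ := by
    refine le_antisymm ?_ ?_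
    · refine Finset.min'_le _ _ ?_
      obtain ⟨h1, h2⟩ := left_mem hA hk hm hn hl1 hlk
      exact mem_layerS.mpr ⟨hl1, by omega, h1, h2⟩
    · exact layerS_ge (Finset.min'_mem _ hne)
  have h := layer_eq_Icc hA hk hm hn (by omega) le_rfl hne
  rw [hmin, max'_eq_sup_id _ hne] at h
  exact h

lemma layer_sup_mem {ℓ i : ℕ} (hl1 : 1 ≤ ℓ) (hlk : ℓ ≤ k - 1) (h1 : ℓ ≤ i) (h2 : i ≤ m) :
    (layerS n A ℓ i).sup id ∈ layerS n A ℓ i := by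
  have hne := layer_nonempty hA hk hm hn hl1 hlk i h1 h2
  rw [← max'_eq_sup_id _ hne]
  exact Finset.max'_mem _ hne

lemma layer_sup_top {ℓ : ℕ} (hl1 : 1 ≤ ℓ) (hlk : ℓ ≤ k - 1) :
    (layerS n A ℓ ℓ).sup id = n := by
  refine le_antisymm ?_ ?_
  · refine Finset.sup_le fun q hq => ?_
    exact (mem_layerS.mp hq).2.1
  · obtain ⟨h1, h2⟩ := top_mem hA hk hm hn hl1 hlk
    exact Finset.le_sup (f := id) (mem_layerS.mpr ⟨by omega, le_rfl, h1, h2⟩)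

lemma layer_sum_aux {ℓ : ℕ} (hl1 : 1 ≤ ℓ) (hlk : ℓ ≤ k - 1) :
    ∀ t i, ℓ ≤ i → i ≤ m → m - i ≤ t →
      (∑ i' ∈ Finset.Icc i m, (layerS n A ℓ i').card) + ℓ
        = (layerS n A ℓ i).sup id + (m - i) + 1 := by
  intro t
  induction t with
  | zero =>
    intro i hi1 hi2 ht
    have hieq : i = m := by omega
    rw [hieq]
    rw [Finset.Icc_self, Finset.sum_singleton]
    have hIcc := layer_row_Icc_last hA hk hm hn hl1 hlk
    have hcard : (layerS n A ℓ m).card = (layerS n A ℓ m).sup id + 1 - ℓ := by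
      conv_lhs => rw [hIcc]
      rw [Nat.card_Icc]
    have hmem := layer_sup_mem hA hk hm hn hl1 hlk (i := m) (by omega) le_rfl
    have hge := layerS_ge hmem
    omega
  | succ t ih =>
    intro i hi1 hi2 ht
    rcases le_or_gt (m - i) t with h | h
    · exact ih i hi1 hi2 h
    · have hilt : i < m := by omega
      have hins : Finset.Icc i m = insert i (Finset.Icc (i+1) m) := by
        rw [Finset.Icc_add_one_left_eq_Ioc, Finset.Ioc_insert_left (by omega : i ≤ m)]
      rw [hins, Finset.sum_insert (by simp)]
      have hih := ih (i+1) (by omega) (by omega) (by omega)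
      have hIcc := layer_row_Icc hA hk hm hn hl1 hlk hi1 hilt
      have hcard : (layerS n A ℓ i).card
          = (layerS n A ℓ i).sup id + 1 - (layerS n A ℓ (i+1)).sup id := by
        conv_lhs => rw [hIcc]
        rw [Nat.card_Icc]
      have hmem1 := layer_sup_mem hA hk hm hn hl1 hlk (i := i+1) (by omega) (by omega)
      have hge1 := layerS_ge hmem1
      -- sup of row i+1 is ≤ sup of row i
      have hne := layer_nonempty hA hk hm hn hl1 hlk i hi1 (by omega)
      have hsle : (layerS n A ℓ (i+1)).sup id ≤ (layerS n A ℓ i).sup id := by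
        rw [hIcc] at hne
        exact Finset.nonempty_Icc.mp hne
      omega

end Main

end Stmt9

namespace Stmt9

lemma layer_empty {n : ℕ} {A : ℕ → ℕ → Bool} {ℓ i : ℕ} (hi1 : 1 ≤ i) (hil : i < ℓ) :
    layerS n A ℓ i = ∅ := by
  rw [Finset.eq_empty_iff_forall_notMem]
  intro j hj
  rw [mem_layerS] at hj
  have := uval_le_row (A := A) i j hi1
  omega

lemma gauss_sum : ∀ K m n : ℕ, K ≤ m → K ≤ n →
    ∑ ℓ ∈ Finset.Icc 1 K, (m + n + 1 - 2 * ℓ) = K * (m + n - K) := by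
  intro K
  induction K with
  | zero => intro m n _ _; simp
  | succ K ih =>
    intro m n hm hn
    rw [Finset.sum_Icc_succ_top (by omega : 1 ≤ K + 1)]
    rw [ih m n (by omega) (by omega)]
    obtain ⟨c, hc⟩ : ∃ c, m + n = 2 * K + 1 + c := ⟨m + n - (2 * K + 1), by omega⟩
    rw [show m + n - K = K + 1 + c by omega, show m + n + 1 - 2 * (K + 1) = c by omega,
      show m + n - (K + 1) = K + c by omega]
    ring

theorem stmt_9' (m n k : ℕ) (hk : 3 ≤ k) (hm : k ≤ m) (hn : k ≤ n)
    (A : ℕ → ℕ → Bool) (hA : MaximalAvoidId m n k A) :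
    onesCount m n A = (k - 1) * (m + n - (k - 1)) := by
  -- express onesCount as a sum of row counts
  have h1 : onesCount m n A
      = ∑ i ∈ Finset.Icc 1 m, ((Finset.Icc 1 n).filter fun j => A i j = true).card := by
    rw [onesCount, Finset.card_filter, Finset.sum_product]
    refine Finset.sum_congr rfl fun i _ => ?_
    rw [Finset.card_filter]
  -- split each row by layers
  have h2 : ∀ i ∈ Finset.Icc 1 m,
      ((Finset.Icc 1 n).filter fun j => A i j = true).card
        = ∑ ℓ ∈ Finset.Icc 1 (k-1), (layerS n A ℓ i).card := by
    intro i hi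
    rw [Finset.mem_Icc] at hi
    refine Finset.card_eq_sum_card_fiberwise (f := fun j => uval A i j)
      (t := Finset.Icc 1 (k-1)) ?_
    intro j hj
    rw [Finset.mem_coe, Finset.mem_filter, Finset.mem_Icc] at hj
    rw [Finset.mem_coe, Finset.mem_Icc]
    dsimp only
    have hpos := uval_pos A i j
    have hlt := avoid_uval_lt hA.1 hi.1 hi.2 hj.1.1 hj.1.2 hj.2
    omega
  rw [h1, Finset.sum_congr rfl h2, Finset.sum_comm]
  -- evaluate the inner sums
  have h3 : ∀ ℓ ∈ Finset.Icc 1 (k-1),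
      ∑ i ∈ Finset.Icc 1 m, (layerS n A ℓ i).card = m + n + 1 - 2 * ℓ := by
    intro ℓ hl
    rw [Finset.mem_Icc] at hl
    have hsub : Finset.Icc ℓ m ⊆ Finset.Icc 1 m := by
      intro x hx
      rw [Finset.mem_Icc] at *
      omega
    rw [← Finset.sum_subset hsub (fun x hx hnx => ?_)]
    · have := layer_sum_aux hA hk hm hn hl.1 hl.2 (m - ℓ) ℓ le_rfl (by omega) le_rfl
      have htop := layer_sup_top hA hk hm hn hl.1 hl.2
      omega
    · rw [Finset.mem_Icc] at hx
      rw [Finset.mem_Icc] at hnx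
      have : x < ℓ := by omega
      rw [layer_empty hx.1 this, Finset.card_empty]
  rw [Finset.sum_congr rfl h3, gauss_sum (k-1) m n (by omega) (by omega)]

end Stmt9

theorem stmt_9 (m n k : ℕ) (hk : 3 ≤ k) (hm : k ≤ m) (hn : k ≤ n)
    (A : ℕ → ℕ → Bool) (hA : MaximalAvoidId m n k A) :
    onesCount m n A = (k - 1) * (m + n - (k - 1)) :=
  Stmt9.stmt_9' m n k hk hm hn A hA
end

section
/- Let m, n ≥ 3 and let A be an m×n (0,1)-matrix with A(1,n) = 1. Then A is 312-avoiding if and only if the (m−1)×(n−1) submatrix A(1,n)̂ of A obtained by deleting row 1 and column n is 12-avoiding; that is, if and only if there do not exist rows 2 ≤ r₂ < r₃ ≤ m and columns 1 ≤ c₂ < c₃ ≤ n−1 with A(r₂,c₂) = A(r₃,c₃) = 1. -/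
/-- `A` is 312-avoiding: no rows `r₁ < r₂ < r₃` and columns `c₁ < c₂ < c₃` with
`A r₁ c₃ = A r₂ c₁ = A r₃ c₂ = 1`. -/
def Avoid312 (m n : ℕ) (A : ℕ → ℕ → Bool) : Prop :=
  ¬ ∃ r₁ r₂ r₃ c₁ c₂ c₃ : ℕ,
    1 ≤ r₁ ∧ r₁ < r₂ ∧ r₂ < r₃ ∧ r₃ ≤ m ∧
    1 ≤ c₁ ∧ c₁ < c₂ ∧ c₂ < c₃ ∧ c₃ ≤ n ∧
    A r₁ c₃ = true ∧ A r₂ c₁ = true ∧ A r₃ c₂ = true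

theorem stmt_10 (m n : ℕ) (hm : 3 ≤ m) (hn : 3 ≤ n) (A : ℕ → ℕ → Bool)
    (h1n : A 1 n = true) :
    Avoid312 m n A ↔
      ¬ ∃ r₂ r₃ c₂ c₃ : ℕ, 2 ≤ r₂ ∧ r₂ < r₃ ∧ r₃ ≤ m ∧
        1 ≤ c₂ ∧ c₂ < c₃ ∧ c₃ ≤ n - 1 ∧
        A r₂ c₂ = true ∧ A r₃ c₃ = true := by
  constructor
  · intro h ⟨r₂, r₃, c₂, c₃, h1, h2, h3, h4, h5, h6, ha, hb⟩
    exact h ⟨1, r₂, r₃, c₂, c₃, n, le_refl 1, h1, h2, h3, h4, h5,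
      lt_of_le_of_lt h6 (by omega), le_refl n, h1n, ha, hb⟩
  · intro h ⟨r₁, r₂, r₃, c₁, c₂, c₃, h1, h2, h3, h4, h5, h6, h7, h8, _, hb, hc⟩
    exact h ⟨r₂, r₃, c₁, c₂, by omega, h3, h4, h5, h6, by omega, hb, hc⟩
end

section
/- Let m, n ≥ 3 and let A be a maximal 312-avoiding m×n (0,1)-matrix with A(1,n) = 1. Then every entry of the first row and of the last column of A equals 1, and the number of 1's of A is exactly 2(m + n − 2). -/
/-- `A` is maximal 312-avoiding. -/
def MaximalAvoid312 (m n : ℕ) (A : ℕ → ℕ → Bool) : Prop :=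
  Avoid312 m n A ∧
    ∀ i j : ℕ, 1 ≤ i → i ≤ m → 1 ≤ j → j ≤ n → A i j = false →
      ¬ Avoid312 m n (setOne A i j)

private lemma setOne_true {A : ℕ → ℕ → Bool} {i j a b : ℕ} (h : setOne A i j a b = true) :
    (a = i ∧ b = j) ∨ A a b = true := by
  unfold setOne at h
  by_cases hc : a = i ∧ b = j
  · exact Or.inl hc
  · rw [if_neg hc] at h; exact Or.inr h

theorem stmt_11 (m n : ℕ) (hm : 3 ≤ m) (hn : 3 ≤ n) (A : ℕ → ℕ → Bool)
    (hA : MaximalAvoid312 m n A) (h1n : A 1 n = true) :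
    (∀ j : ℕ, 1 ≤ j → j ≤ n → A 1 j = true) ∧
    (∀ i : ℕ, 1 ≤ i → i ≤ m → A i n = true) ∧
    onesCount m n A = 2 * (m + n - 2) := by
  obtain ⟨hav, hmax⟩ := hA
  have noPat : ∀ r₁ r₂ r₃ c₁ c₂ c₃ : ℕ, 1 ≤ r₁ → r₁ < r₂ → r₂ < r₃ → r₃ ≤ m →
      1 ≤ c₁ → c₁ < c₂ → c₂ < c₃ → c₃ ≤ n →
      A r₁ c₃ = true → A r₂ c₁ = true → A r₃ c₂ = true → False :=
    fun r₁ r₂ r₃ c₁ c₂ c₃ h1 h2 h3 h4 h5 h6 h7 h8 e1 e2 e3 =>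
      hav ⟨r₁, r₂, r₃, c₁, c₂, c₃, h1, h2, h3, h4, h5, h6, h7, h8, e1, e2, e3⟩
  -- Step 1: the first row is all ones
  have row1 : ∀ j : ℕ, 1 ≤ j → j ≤ n → A 1 j = true := by
    intro j hj1 hjn
    by_contra hf
    rw [Bool.not_eq_true] at hf
    have hm' := hmax 1 j le_rfl (by omega) hj1 hjn hf
    rw [Avoid312, not_not] at hm'
    obtain ⟨r₁, r₂, r₃, c₁, c₂, c₃, h1, h2, h3, h4, h5, h6, h7, h8, e1, e2, e3⟩ := hm'
    have a2 : A r₂ c₁ = true := by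
      rcases setOne_true e2 with ⟨h, _⟩ | h
      · omega
      · exact h
    have a3 : A r₃ c₂ = true := by
      rcases setOne_true e3 with ⟨h, _⟩ | h
      · omega
      · exact h
    rcases setOne_true e1 with ⟨hr, hc⟩ | h
    · subst hr; subst hc
      exact noPat 1 r₂ r₃ c₁ c₂ n h1 h2 h3 h4 h5 h6 (by omega) le_rfl h1n a2 a3
    · exact noPat r₁ r₂ r₃ c₁ c₂ c₃ h1 h2 h3 h4 h5 h6 h7 h8 h a2 a3
  -- Step 2: the last column is all ones
  have coln : ∀ i : ℕ, 1 ≤ i → i ≤ m → A i n = true := by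
    intro i hi1 him
    by_contra hf
    rw [Bool.not_eq_true] at hf
    have hm' := hmax i n hi1 him (by omega) le_rfl hf
    rw [Avoid312, not_not] at hm'
    obtain ⟨r₁, r₂, r₃, c₁, c₂, c₃, h1, h2, h3, h4, h5, h6, h7, h8, e1, e2, e3⟩ := hm'
    have a2 : A r₂ c₁ = true := by
      rcases setOne_true e2 with ⟨_, h⟩ | h
      · omega
      · exact h
    have a3 : A r₃ c₂ = true := by
      rcases setOne_true e3 with ⟨_, h⟩ | h
      · omega
      · exact h
    rcases setOne_true e1 with ⟨hr, hc⟩ | h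
    · exact noPat 1 r₂ r₃ c₁ c₂ n le_rfl (by omega) h3 h4 h5 h6 (by omega) le_rfl h1n a2 a3
    · exact noPat r₁ r₂ r₃ c₁ c₂ c₃ h1 h2 h3 h4 h5 h6 h7 h8 h a2 a3
  -- no strictly increasing pair of ones inside rows 2..m, columns 1..n-1
  have chain : ∀ r c r' c' : ℕ, 2 ≤ r → r < r' → r' ≤ m → 1 ≤ c → c < c' → c' + 1 ≤ n →
      A r c = true → A r' c' = true → False := by
    intro r c r' c' h1 h2 h3 h4 h5 h6 e1 e2
    exact noPat 1 r r' c c' (c' + 1) le_rfl (by omega) h2 h3 h4 h5 (by omega) h6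
      (row1 (c' + 1) (by omega) h6) e1 e2
  -- the interior ones
  set S : Finset (ℕ × ℕ) :=
    ((Finset.Icc 2 m) ×ˢ (Finset.Icc 1 (n - 1))).filter (fun p => A p.1 p.2 = true) with hS
  have memS : ∀ a b : ℕ, (a, b) ∈ S ↔
      (2 ≤ a ∧ a ≤ m ∧ 1 ≤ b ∧ b ≤ n - 1 ∧ A a b = true) := by
    intro a b
    simp [hS, Finset.mem_filter, Finset.mem_product, Finset.mem_Icc, and_assoc]
  have chainS : ∀ a b a' b' : ℕ, (a, b) ∈ S → (a', b') ∈ S → a < a' → b' ≤ b := by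
    intro a b a' b' hp hq hlt
    rw [memS] at hp hq
    by_contra hgt
    exact chain a b a' b' hp.1 hlt hq.2.1 hp.2.2.1 (by omega) (by omega) hp.2.2.2.2 hq.2.2.2.2
  have LR : ∀ a b a' b' v : ℕ, (a, b) ∈ S → (a', b') ∈ S →
      a + (n - 1) - b < v → v < a' + (n - 1) - b' → a ≤ a' ∧ b' ≤ b := by
    intro a b a' b' v hp hq hpv hqv
    have hp' := (memS a b).mp hp
    have hq' := (memS a' b').mp hq
    obtain ⟨g1, g2, g3, g4, -⟩ := hp'
    obtain ⟨g1', g2', g3', g4', -⟩ := hq'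
    rcases lt_trichotomy a a' with h | h | h
    · exact ⟨le_of_lt h, chainS a b a' b' hp hq h⟩
    · constructor
      · omega
      · omega
    · have := chainS a' b' a b hq hp h
      omega
  -- surjectivity of the diagonal value map on S
  have surj : ∀ v : ℕ, 2 ≤ v → v ≤ m + n - 2 → ∃ p, p ∈ S ∧ p.1 + (n - 1) - p.2 = v := by
    intro v hv2 hvm
    by_contra hno
    push_neg at hno
    have hno' : ∀ a b : ℕ, (a, b) ∈ S → a + (n - 1) - b ≠ v := fun a b h => hno (a, b) h
    set f : ℕ × ℕ → ℕ :=
      fun p => if p.1 + (n - 1) - p.2 < v then p.1 else v + p.2 + 1 - n with hf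
    set r : ℕ := max (max 2 (v + 2 - n)) (S.sup f) with hr
    have hr2 : 2 ≤ r := le_trans (le_max_left 2 _) (le_max_left _ _)
    have hrvn : v + 2 - n ≤ r := le_trans (le_max_right 2 _) (le_max_left _ _)
    have hgeL : ∀ a b : ℕ, (a, b) ∈ S → a + (n - 1) - b < v → a ≤ r := by
      intro a b hp hpv
      have h1 : f (a, b) ≤ S.sup f := Finset.le_sup hp
      rw [hf] at h1
      simp only [if_pos hpv] at h1
      calc a ≤ S.sup f := h1
        _ ≤ r := le_max_right _ _
    have hgeR : ∀ a b : ℕ, (a, b) ∈ S → v < a + (n - 1) - b → v + b + 1 - n ≤ r := by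
      intro a b hp hpv
      have h1 : f (a, b) ≤ S.sup f := Finset.le_sup hp
      rw [hf] at h1
      simp only [if_neg (by omega : ¬(a + (n - 1) - b < v))] at h1
      calc v + b + 1 - n ≤ S.sup f := h1
        _ ≤ r := le_max_right _ _
    have hrm : r ≤ m := by
      rw [hr]
      apply max_le (max_le (by omega) (by omega))
      apply Finset.sup_le
      intro p hp
      obtain ⟨a, b⟩ := p
      obtain ⟨g1, g2, g3, g4, -⟩ := (memS a b).mp hp
      have hpv := hno' a b hp
      rw [hf]
      dsimp only
      by_cases h : a + (n - 1) - b < v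
      · simp only [if_pos h]; exact g2
      · simp only [if_neg h]; omega
    have hrv : r ≤ v := by
      rw [hr]
      apply max_le (max_le (by omega) (by omega))
      apply Finset.sup_le
      intro p hp
      obtain ⟨a, b⟩ := p
      obtain ⟨g1, g2, g3, g4, -⟩ := (memS a b).mp hp
      have hpv := hno' a b hp
      rw [hf]
      dsimp only
      by_cases h : a + (n - 1) - b < v
      · simp only [if_pos h]; omega
      · simp only [if_neg h]; omega
    have hrL : ∀ a b : ℕ, (a, b) ∈ S → a + (n - 1) - b < v → r + n ≤ v + b + 1 := by
      intro a b hp hpv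
      obtain ⟨g1, g2, g3, g4, -⟩ := (memS a b).mp hp
      have key : a + 1 ≤ v + b + 1 - n := by omega
      have hub : r ≤ v + b + 1 - n := by
        rw [hr]
        apply max_le (max_le (by omega) (by omega))
        apply Finset.sup_le
        intro q hq
        obtain ⟨a', b'⟩ := q
        obtain ⟨g1', g2', g3', g4', -⟩ := (memS a' b').mp hq
        have hqv := hno' a' b' hq
        rw [hf]
        dsimp only
        by_cases hcase : a' + (n - 1) - b' < v
        · simp only [if_pos hcase]
          rcases le_or_gt a' a with hle | hlt
          · omega
          · have := chainS a b a' b' hp hq hlt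
            omega
        · simp only [if_neg hcase]
          have := (LR a b a' b' v hp hq hpv (by omega)).2
          omega
      omega
    have hrR : ∀ a b : ℕ, (a, b) ∈ S → v < a + (n - 1) - b → r ≤ a := by
      intro a b hp hpv
      obtain ⟨g1, g2, g3, g4, -⟩ := (memS a b).mp hp
      rw [hr]
      apply max_le (max_le (by omega) (by omega))
      apply Finset.sup_le
      intro q hq
      obtain ⟨a', b'⟩ := q
      obtain ⟨g1', g2', g3', g4', -⟩ := (memS a' b').mp hq
      have hqv := hno' a' b' hq
      rw [hf]
      dsimp only
      by_cases hcase : a' + (n - 1) - b' < v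
      · simp only [if_pos hcase]
        exact (LR a' b' a b v hq hp hcase hpv).1
      · simp only [if_neg hcase]
        rcases le_or_gt a' a with hle | hlt
        · omega
        · have := chainS a b a' b' hp hq hlt
          omega
    -- the cell to add
    have hrn : v + 1 ≤ r + n - 1 := by omega
    set c : ℕ := r + (n - 1) - v with hc
    have hc1 : 1 ≤ c := by omega
    have hcn : c ≤ n - 1 := by omega
    have hvalc : r + (n - 1) - c = v := by omega
    have hA0 : A r c = false := by
      by_contra hA1
      rw [Bool.not_eq_false] at hA1
      exact hno' r c ((memS r c).mpr ⟨hr2, hrm, hc1, hcn, hA1⟩) hvalc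
    have hm' := hmax r c (by omega) hrm hc1 (by omega) hA0
    rw [Avoid312, not_not] at hm'
    obtain ⟨r₁, r₂, r₃, c₁, c₂, c₃, h1, h2, h3, h4, h5, h6, h7, h8, e1, e2, e3⟩ := hm'
    have hb2 : 2 ≤ r₂ := by omega
    have hc2 : c₂ ≤ n - 1 := by omega
    rcases setOne_true e2 with ⟨hra, hca⟩ | ha2
    · rcases setOne_true e3 with ⟨hrb, hcb⟩ | ha3
      · omega
      · -- new cell is (r₂,c₁) = (r,c); (r₃,c₂) ∈ S with r < r₃, c < c₂
        have hqS : (r₃, c₂) ∈ S := (memS r₃ c₂).mpr ⟨by omega, h4, by omega, hc2, ha3⟩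
        have hqv := hno' r₃ c₂ hqS
        rcases lt_or_gt_of_ne hqv with hlt | hgt
        · have := hgeL r₃ c₂ hqS hlt
          omega
        · have := hgeR r₃ c₂ hqS hgt
          omega
    · rcases setOne_true e3 with ⟨hrb, hcb⟩ | ha3
      · -- new cell is (r₃,c₂) = (r,c); (r₂,c₁) ∈ S with r₂ < r, c₁ < c
        have hpS : (r₂, c₁) ∈ S := (memS r₂ c₁).mpr ⟨hb2, by omega, h5, by omega, ha2⟩
        have hpv := hno' r₂ c₁ hpS
        rcases lt_or_gt_of_ne hpv with hlt | hgt
        · have := hrL r₂ c₁ hpS hlt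
          omega
        · have := hrR r₂ c₁ hpS hgt
          omega
      · exact chain r₂ c₁ r₃ c₂ hb2 h3 h4 h5 h6 (by omega) ha2 ha3
  -- cardinality of the interior
  have hScard : S.card = m + n - 3 := by
    have hbij : S.card = (Finset.Icc 2 (m + n - 2)).card := by
      apply Finset.card_nbij (i := fun p => p.1 + (n - 1) - p.2)
      · intro p hp
        obtain ⟨a, b⟩ := p
        obtain ⟨g1, g2, g3, g4, -⟩ := (memS a b).mp hp
        simp only [Finset.mem_coe, Finset.mem_Icc]
        omega
      · intro p hp q hq h
        obtain ⟨a, b⟩ := p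
        obtain ⟨a', b'⟩ := q
        rw [Finset.mem_coe] at hp hq
        obtain ⟨g1, g2, g3, g4, -⟩ := (memS a b).mp hp
        obtain ⟨g1', g2', g3', g4', -⟩ := (memS a' b').mp hq
        dsimp only at h
        rcases lt_trichotomy a a' with hlt | heq | hgt
        · have := chainS a b a' b' hp hq hlt
          omega
        · have hbb : b = b' := by omega
          subst heq; subst hbb; rfl
        · have := chainS a' b' a b hq hp hgt
          omega
      · intro w hw
        rw [Finset.coe_Icc, Set.mem_Icc] at hw
        obtain ⟨p, hpS, hpv⟩ := surj w hw.1 hw.2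
        exact ⟨p, Finset.mem_coe.mpr hpS, hpv⟩
    rw [hbij, Nat.card_Icc]
    omega
  refine ⟨row1, coln, ?_⟩
  -- decompose the set of ones
  have hdecomp : (((Finset.Icc 1 m) ×ˢ (Finset.Icc 1 n)).filter fun p => A p.1 p.2 = true)
      = (({1} : Finset ℕ) ×ˢ (Finset.Icc 1 n)) ∪ ((Finset.Icc 2 m) ×ˢ ({n} : Finset ℕ)) ∪ S := by
    ext ⟨a, b⟩
    simp only [Finset.mem_filter, Finset.mem_product, Finset.mem_Icc, Finset.mem_union,
      Finset.mem_singleton]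
    rw [memS a b]
    constructor
    · rintro ⟨⟨⟨ha1, ham⟩, hb1, hbn⟩, hab⟩
      by_cases h1 : a = 1
      · exact Or.inl (Or.inl ⟨h1, hb1, hbn⟩)
      · by_cases h2 : b = n
        · exact Or.inl (Or.inr ⟨⟨by omega, ham⟩, h2⟩)
        · exact Or.inr ⟨by omega, ham, hb1, by omega, hab⟩
    · rintro ((⟨h1, hb1, hbn⟩ | ⟨⟨ha2, ham⟩, hbn⟩) | hS')
      · subst h1; exact ⟨⟨⟨le_rfl, by omega⟩, hb1, hbn⟩, row1 b hb1 hbn⟩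
      · subst hbn; exact ⟨⟨⟨by omega, ham⟩, by omega, le_rfl⟩, coln a (by omega) ham⟩
      · exact ⟨⟨⟨by omega, hS'.2.1⟩, hS'.2.2.1, by omega⟩, hS'.2.2.2.2⟩
  have d1 : Disjoint (({1} : Finset ℕ) ×ˢ (Finset.Icc 1 n))
      ((Finset.Icc 2 m) ×ˢ ({n} : Finset ℕ)) := by
    rw [Finset.disjoint_left]
    rintro ⟨a, b⟩ hx hy
    simp only [Finset.mem_product, Finset.mem_singleton, Finset.mem_Icc] at hx hy
    omega
  have d2 : Disjoint ((({1} : Finset ℕ) ×ˢ (Finset.Icc 1 n)) ∪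
      ((Finset.Icc 2 m) ×ˢ ({n} : Finset ℕ))) S := by
    rw [Finset.disjoint_left]
    rintro ⟨a, b⟩ hx hy
    obtain ⟨g1, g2, g3, g4, -⟩ := (memS a b).mp hy
    simp only [Finset.mem_union, Finset.mem_product, Finset.mem_singleton,
      Finset.mem_Icc] at hx
    omega
  rw [onesCount, hdecomp, Finset.card_union_of_disjoint d2, Finset.card_union_of_disjoint d1]
  simp only [Finset.card_product, Finset.card_singleton, Nat.card_Icc, hScard]
  omega
end

section
/- Let k ≥ 3, let m, n ≥ k, and let A be a maximal k12⋯(k−1)-avoiding m×n (0,1)-matrix with A(1,n) = 0. Then there exist integers 1 ≤ p₁ ≤ p₂ ≤ ⋯ ≤ p_m = n such that, setting p₀ = 1, for every row i (1 ≤ i ≤ m): A(i,j) = 1 for all j with p_{i−1} ≤ j ≤ p_i, and A(i,j) = 0 for all j with j > p_i. (In other words, the 0's in the upper-right corner of A form a reverse Ferrers array bordered by a complete zigzag path of m + n − 1 ones running from position (1,1) to position (m,n).) -/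
/-- `A` is `k12⋯(k-1)`-avoiding: there are no strictly increasing rows
`r 0 < ⋯ < r (k-1)` and columns `c 0 < ⋯ < c (k-1)` in the array with
`A (r 0) (c (k-1)) = 1` and `A (r (t+1)) (c t) = 1` for `t = 0, …, k-2`. -/
def AvoidK1 (m n k : ℕ) (A : ℕ → ℕ → Bool) : Prop :=
  ¬ ∃ r c : ℕ → ℕ,
    (∀ t, t + 1 < k → r t < r (t + 1) ∧ c t < c (t + 1)) ∧
    (∀ t, t < k → 1 ≤ r t ∧ r t ≤ m ∧ 1 ≤ c t ∧ c t ≤ n) ∧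
    A (r 0) (c (k - 1)) = true ∧
    (∀ t, t + 1 < k → A (r (t + 1)) (c t) = true)

/-- `A` is maximal `k12⋯(k-1)`-avoiding. -/
def MaximalAvoidK1 (m n k : ℕ) (A : ℕ → ℕ → Bool) : Prop :=
  AvoidK1 m n k A ∧
    ∀ i j : ℕ, 1 ≤ i → i ≤ m → 1 ≤ j → j ≤ n → A i j = false →
      ¬ AvoidK1 m n k (setOne A i j)

/-- a pointwise-increasing function on an initial segment is strictly monotone there -/
lemma mono_of_step {f : ℕ → ℕ} {k : ℕ} (h : ∀ t, t + 1 < k → f t < f (t + 1)) :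
    ∀ s t, s < t → t < k → f s < f t := by
  intro s t hst htk
  induction t with
  | zero => omega
  | succ t ih =>
    rcases Nat.lt_succ_iff_lt_or_eq.mp hst with h' | h'
    · exact lt_trans (ih h' (by omega)) (h t htk)
    · subst h'; exact h s htk

/-- an increasing chain of `ℓ` ones strictly below row `i` and strictly
left of column `j` -/
def ChainLL (m : ℕ) (A : ℕ → ℕ → Bool) (ℓ i j : ℕ) : Prop :=
  ∃ a b : ℕ → ℕ,
    (∀ t, t + 1 < ℓ → a t < a (t + 1) ∧ b t < b (t + 1)) ∧
    (∀ t, t < ℓ → i < a t ∧ a t ≤ m ∧ 1 ≤ b t ∧ b t < j) ∧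
    (∀ t, t < ℓ → A (a t) (b t) = true)

lemma chainLL_mono {m ℓ i j i' j' : ℕ} {A : ℕ → ℕ → Bool}
    (h : ChainLL m A ℓ i j) (hi : i' ≤ i) (hj : j ≤ j') : ChainLL m A ℓ i' j' := by
  obtain ⟨a, b, h1, h2, h3⟩ := h
  exact ⟨a, b, h1, fun t ht => by have := h2 t ht; omega, h3⟩

/-- if `A` avoids the pattern, a one has no `(k-1)`-chain below-left of it -/
lemma not_chain_of_one {m n k i j : ℕ} {A : ℕ → ℕ → Bool} (hk : 3 ≤ k)
    (hA : AvoidK1 m n k A) (hi : 1 ≤ i) (hj : j ≤ n) (h1 : A i j = true) :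
    ¬ ChainLL m A (k - 1) i j := by
  rintro ⟨a, b, hinc, hbd, hone⟩
  apply hA
  refine ⟨fun t => match t with | 0 => i | (t' + 1) => a t',
          fun t => if t = k - 1 then j else b t, ?_, ?_, ?_, ?_⟩
  · intro t ht
    constructor
    · rcases t with _ | t'
      · exact (hbd 0 (by omega)).1
      · exact (hinc t' (by omega)).1
    · show (if t = k - 1 then j else b t) < (if t + 1 = k - 1 then j else b (t + 1))
      rw [if_neg (show ¬ t = k - 1 by omega)]
      by_cases h2 : t + 1 = k - 1
      · rw [if_pos h2]
        exact (hbd t (by omega)).2.2.2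
      · rw [if_neg h2]
        exact (hinc t (by omega)).2
  · intro t ht
    refine ⟨?_, ?_, ?_, ?_⟩
    · rcases t with _ | t'
      · exact hi
      · show 1 ≤ a t'
        have := (hbd t' (by omega)).1
        omega
    · rcases t with _ | t'
      · show i ≤ m
        have h1 := (hbd 0 (by omega)).1
        have h2 := (hbd 0 (by omega)).2.1
        omega
      · show a t' ≤ m
        exact (hbd t' (by omega)).2.1
    · show 1 ≤ (if t = k - 1 then j else b t)
      by_cases h2 : t = k - 1
      · rw [if_pos h2]
        have := (hbd 0 (by omega)).2.2
        omega
      · rw [if_neg h2]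
        exact (hbd t (by omega)).2.2.1
    · show (if t = k - 1 then j else b t) ≤ n
      by_cases h2 : t = k - 1
      · rw [if_pos h2]; exact hj
      · rw [if_neg h2]
        have := (hbd t (by omega)).2.2.2
        omega
  · show A i (if k - 1 = k - 1 then j else b (k - 1)) = true
    rw [if_pos rfl]; exact h1
  · intro t ht
    show A (a t) (if t = k - 1 then j else b t) = true
    rw [if_neg (show ¬ t = k - 1 by omega)]
    exact hone t (by omega)

/-- a zero entry of a maximal avoiding matrix either has a `(k-1)`-chain
below-left of it, or there is a one strictly above-right of it -/
lemma zero_cases {m n k i j : ℕ} {A : ℕ → ℕ → Bool} (hk : 3 ≤ k)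
    (hA : MaximalAvoidK1 m n k A) (hi1 : 1 ≤ i) (him : i ≤ m) (hj1 : 1 ≤ j)
    (hjn : j ≤ n) (h0 : A i j = false) :
    ChainLL m A (k - 1) i j ∨ ∃ r c, 1 ≤ r ∧ r < i ∧ j < c ∧ c ≤ n ∧ A r c = true := by
  have hnot := hA.2 i j hi1 him hj1 hjn h0
  simp only [AvoidK1, not_not] at hnot
  obtain ⟨r, c, hrc, hbd, htop, hch⟩ := hnot
  have hrmono := mono_of_step (f := r) (fun t ht => (hrc t ht).1)
  have hcmono := mono_of_step (f := c) (fun t ht => (hrc t ht).2)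
  simp only [setOne] at htop hch
  by_cases htj : r 0 = i ∧ c (k - 1) = j
  · left
    refine ⟨fun t => r (t + 1), fun t => c t, ?_, ?_, ?_⟩
    · intro t ht
      exact ⟨(hrc (t + 1) (by omega)).1, (hrc t (by omega)).2⟩
    · intro t ht
      dsimp only
      refine ⟨?_, (hbd (t + 1) (by omega)).2.1, (hbd t (by omega)).2.2.1, ?_⟩
      · rw [← htj.1]; exact hrmono 0 (t + 1) (by omega) (by omega)
      · rw [← htj.2]; exact hcmono t (k - 1) (by omega) (by omega)
    · intro t ht
      have h2 := hch t (by omega)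
      have hne : ¬ (r (t + 1) = i ∧ c t = j) := by
        rintro ⟨he, -⟩
        have := hrmono 0 (t + 1) (by omega) (by omega)
        omega
      rw [if_neg hne] at h2
      exact h2
  · right
    have hex : ∃ t0, t0 + 1 < k ∧ r (t0 + 1) = i ∧ c t0 = j := by
      by_contra hno
      push_neg at hno
      apply hA.1
      refine ⟨r, c, hrc, hbd, ?_, ?_⟩
      · rwa [if_neg htj] at htop
      · intro t ht
        have h2 := hch t ht
        have hne : ¬ (r (t + 1) = i ∧ c t = j) := by
          rintro ⟨he1, he2⟩; exact hno t ht he1 he2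
        rwa [if_neg hne] at h2
    obtain ⟨t0, ht0, hri, hcj⟩ := hex
    have hr0 : r 0 < i := by
      rw [← hri]; exact hrmono 0 (t0 + 1) (by omega) (by omega)
    have hne : ¬ (r 0 = i ∧ c (k - 1) = j) := by rintro ⟨he, -⟩; omega
    rw [if_neg hne] at htop
    refine ⟨r 0, c (k - 1), (hbd 0 (by omega)).1, hr0, ?_,
      (hbd (k - 1) (by omega)).2.2.2, htop⟩
    rw [← hcj]; exact hcmono t0 (k - 1) (by omega) (by omega)

theorem stmt_12 (m n k : ℕ) (hk : 3 ≤ k) (hm : k ≤ m) (hn : k ≤ n)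
    (A : ℕ → ℕ → Bool) (hA : MaximalAvoidK1 m n k A) (h1n : A 1 n = false) :
    ∃ p : ℕ → ℕ, p 0 = 1 ∧ 1 ≤ p 1 ∧
      (∀ i : ℕ, 1 ≤ i → i < m → p i ≤ p (i + 1)) ∧ p m = n ∧
      ∀ i : ℕ, 1 ≤ i → i ≤ m →
        (∀ j : ℕ, p (i - 1) ≤ j → j ≤ p i → A i j = true) ∧
        (∀ j : ℕ, p i < j → j ≤ n → A i j = false) := by
  classical
  obtain ⟨q, hqd⟩ : ∃ q : ℕ → ℕ,
      ∀ i, q i = Nat.findGreatest (fun j => A i j = true) n := ⟨_, fun _ => rfl⟩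
  obtain ⟨p, hpd⟩ : ∃ p : ℕ → ℕ,
      ∀ i, p i = if i = 0 then 1 else q i := ⟨_, fun _ => rfl⟩
  have hqn : ∀ i, q i ≤ n := by
    intro i; rw [hqd]; exact Nat.findGreatest_le n
  have hmemq : ∀ i j, j ≤ n → A i j = true → j ≤ q i := by
    intro i j h1 h2; rw [hqd]; exact Nat.le_findGreatest h1 h2
  have hzeros : ∀ i j, q i < j → j ≤ n → A i j = false := by
    intro i j h1 h2
    rw [hqd] at h1
    have := Nat.findGreatest_is_greatest (P := fun j => A i j = true) h1 h2
    simpa using this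
  have hqspec : ∀ i j, j ≤ n → A i j = true → A i (q i) = true := by
    intro i j h1 h2
    rw [hqd]
    exact Nat.findGreatest_spec (P := fun j' => A i j' = true) h1 h2
  -- A 1 1 = true
  have hA11 : A 1 1 = true := by
    by_contra h
    rw [Bool.not_eq_true] at h
    rcases zero_cases hk hA le_rfl (by omega) le_rfl (by omega) h with
      ⟨a, b, hinc, hbd, hone⟩ | ⟨r, c, hr1, hri, _, _, _⟩
    · have := hbd 0 (by omega); omega
    · omega
  -- A m n = true
  have hAmn : A m n = true := by
    by_contra h
    rw [Bool.not_eq_true] at h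
    rcases zero_cases hk hA (by omega) le_rfl (by omega) le_rfl h with
      ⟨a, b, hinc, hbd, hone⟩ | ⟨r, c, _, _, hjc, hcn, _⟩
    · have := hbd 0 (by omega); omega
    · omega
  have hq1 : 1 ≤ q 1 := hmemq 1 1 (by omega) hA11
  -- core induction
  have core : ∀ i, 1 ≤ i → i ≤ m →
      A i (p (i - 1)) = true ∧ ∀ t, 1 ≤ t → t ≤ i → q t ≤ q i := by
    intro i hi
    induction i, hi using Nat.le_induction with
    | base =>
      intro _
      constructor
      · rw [show (1 : ℕ) - 1 = 0 from rfl, hpd, if_pos rfl]; exact hA11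
      · intro t h1 h2
        have : t = 1 := by omega
        subst this; exact le_rfl
    | succ i hi ih =>
      intro him
      obtain ⟨hrow, hmono⟩ := ih (by omega)
      have hpin : p (i - 1) ≤ n := by
        rw [hpd]
        by_cases h : i - 1 = 0
        · rw [if_pos h]; omega
        · rw [if_neg h]; exact hqn _
      have hAiq : A i (q i) = true := hqspec i (p (i - 1)) hpin hrow
      have hqi1 : 1 ≤ q i := le_trans hq1 (hmono 1 le_rfl hi)
      have hnext : A (i + 1) (q i) = true := by
        by_contra h
        rw [Bool.not_eq_true] at h
        rcases zero_cases hk hA (by omega) him hqi1 (hqn i) h with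
          hch | ⟨r, c, hr1, hri, hqc, hcn, hArc⟩
        · exact not_chain_of_one hk hA.1 hi (hqn i) hAiq
            (chainLL_mono hch (by omega) le_rfl)
        · have h1 : c ≤ q r := hmemq r c hcn hArc
          have h2 : q r ≤ q i := hmono r hr1 (by omega)
          omega
      constructor
      · rw [show i + 1 - 1 = i from by omega, hpd,
            if_neg (show ¬ i = 0 by omega)]
        exact hnext
      · intro t h1 h2
        have hqq : q i ≤ q (i + 1) := hmemq (i + 1) (q i) (hqn i) hnext
        rcases Nat.lt_succ_iff_lt_or_eq.mp (Nat.lt_succ_of_le h2) with h' | h'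
        · exact le_trans (hmono t h1 (by omega)) hqq
        · subst h'; exact le_rfl
  refine ⟨p, by rw [hpd]; rfl, ?_, ?_, ?_, ?_⟩
  · rw [hpd, if_neg (by omega : ¬ (1 : ℕ) = 0)]; exact hq1
  · intro i h1 h2
    rw [hpd, hpd, if_neg (by omega : ¬ i = 0), if_neg (by omega : ¬ i + 1 = 0)]
    exact (core (i + 1) (by omega) (by omega)).2 i h1 (by omega)
  · have h1 : n ≤ q m := hmemq m n le_rfl hAmn
    rw [hpd, if_neg (by omega : ¬ m = 0)]
    exact le_antisymm (hqn m) h1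
  · intro i hi1 him
    have hpi : p i = q i := by rw [hpd, if_neg (by omega : ¬ i = 0)]
    obtain ⟨hrow, hmono⟩ := core i hi1 him
    have hpin : p (i - 1) ≤ n := by
      rw [hpd]
      by_cases h : i - 1 = 0
      · rw [if_pos h]; omega
      · rw [if_neg h]; exact hqn _
    have hpi1 : 1 ≤ p (i - 1) := by
      rw [hpd]
      by_cases h : i - 1 = 0
      · rw [if_pos h]
      · rw [if_neg h]
        exact le_trans hq1 ((core (i - 1) (by omega) (by omega)).2 1 le_rfl (by omega))
    have hAiq : A i (q i) = true := hqspec i (p (i - 1)) hpin hrow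
    constructor
    · intro j hj1 hj2
      rw [hpi] at hj2
      by_contra h
      rw [Bool.not_eq_true] at h
      have hjq : j < q i := by
        rcases lt_or_eq_of_le hj2 with h' | h'
        · exact h'
        · rw [h'] at h; rw [h] at hAiq; exact absurd hAiq (by simp)
      rcases zero_cases hk hA hi1 him (by omega) (by have := hqn i; omega) h with
        hch | ⟨r, c, hr1, hri, hjc, hcn, hArc⟩
      · exact not_chain_of_one hk hA.1 hi1 (hqn i) hAiq
          (chainLL_mono hch le_rfl (by omega))
      · have hi2 : 2 ≤ i := by omega
        have hqr : q r ≤ q (i - 1) :=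
          (core (i - 1) (by omega) (by omega)).2 r hr1 (by omega)
        have hpq : p (i - 1) = q (i - 1) := by
          rw [hpd, if_neg (by omega : ¬ i - 1 = 0)]
        have : A r c = false := hzeros r c (by omega) hcn
        rw [this] at hArc; exact absurd hArc (by simp)
    · intro j hj1 hj2
      rw [hpi] at hj1
      exact hzeros i j hj1 hj2
end
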